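/- arXiv:2108.13578 — 7 statements merged into one kernel-verified Lean document; each statement's English description precedes it below -/
import Mathlib

section
/- Let G = (V_L, V_R, E) be a bipartite t-left-regular (γ,μ)-unique expander with |V_L| = n, and suppose every vertex of V_R has degree at most s_max. Let B ∈ {0,1,−1}^{m×n} be any signed adjacency matrix of G. Let 0 < ε ≤ 1 and 1 ≤ p < 2 be such that ε² ≥ 9 μ s_max^{p−1}. Then B is (γn, ε)-ℓ_p-RIP with normalization t^{1/p}; that is, for every γn-sparse x ∈ ℝ^n, t^{1/p}(1−ε)‖x‖_p ≤ ‖Bx‖_p ≤ t^{1/p}(1+ε)‖x‖_p. -/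
open Finset

noncomputable def lpNorm {ι : Type*} [Fintype ι] (p : ℝ) (x : ι → ℝ) : ℝ :=
  (∑ i, |x i| ^ p) ^ (1 / p)

/-- `x` has at most `k` nonzero coordinates. -/
def Sparse {ι : Type*} (k : ℝ) (x : ι → ℝ) : Prop :=
  ((Function.support x).ncard : ℝ) ≤ k

/-- `x` is `(k, ε)`-`ℓ_p`-compressible. -/
def Compressible {ι : Type*} [Fintype ι] (p k ε : ℝ) (x : ι → ℝ) : Prop :=
  ∃ y : ι → ℝ, Sparse k y ∧ lpNorm p (x - y) ≤ ε * lpNorm p x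

/-- A subspace is `(k, ε)`-`ℓ_p`-spread if every nonzero vector in it is not
`(k, ε)`-`ℓ_p`-compressible. -/
def SpreadSubspace {ι : Type*} [Fintype ι] (p k ε : ℝ) (X : Submodule ℝ (ι → ℝ)) : Prop :=
  ∀ x ∈ X, x ≠ 0 → ¬ Compressible p k ε x

/-- The `(ℓ_q, ℓ_p)`-distortion of a vector. -/
noncomputable def distortion {ι : Type*} [Fintype ι] (q p : ℝ) (x : ι → ℝ) : ℝ :=
  (Fintype.card ι : ℝ) ^ (1 / q - 1 / p) * lpNorm p x / lpNorm q x

/-- The `(ℓ_q, ℓ_p)`-distortion of a subspace. -/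
noncomputable def distortionSub {ι : Type*} [Fintype ι] (q p : ℝ)
    (X : Submodule ℝ (ι → ℝ)) : ℝ :=
  sSup {d | ∃ x ∈ X, x ≠ 0 ∧ d = distortion q p x}

/-- A bipartite graph, presented as the neighbor sets of the left vertices,
is `t`-left-regular. -/
def LeftRegular {n m : ℕ} (N : Fin n → Finset (Fin m)) (t : ℕ) : Prop :=
  ∀ u, (N u).card = t

/-- The neighborhood `N(S)` of a set `S` of left vertices. -/
def nbrs {n m : ℕ} (N : Fin n → Finset (Fin m)) (S : Finset (Fin n)) : Finset (Fin m) :=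
  S.biUnion N

/-- The set `U(S)` of unique neighbors of a set `S` of left vertices. -/
def uniqueNbrs {n m : ℕ} (N : Fin n → Finset (Fin m)) (S : Finset (Fin n)) : Finset (Fin m) :=
  (nbrs N S).filter (fun r => (S.filter (fun v => r ∈ N v)).card = 1)

/-- The degree of a right vertex. -/
def rightDeg {n m : ℕ} (N : Fin n → Finset (Fin m)) (r : Fin m) : ℕ :=
  (Finset.univ.filter (fun u => r ∈ N u)).card

/-- `(γ, μ)`-vertex expansion. -/
def VertexExpander {n m : ℕ} (N : Fin n → Finset (Fin m)) (t : ℕ) (γ μ : ℝ) : Prop :=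
  ∀ S : Finset (Fin n), (S.card : ℝ) ≤ γ * n →
    (t : ℝ) * (1 - μ) * S.card ≤ ((nbrs N S).card : ℝ)

/-- `(γ, μ)`-unique expansion. -/
def UniqueExpander {n m : ℕ} (N : Fin n → Finset (Fin m)) (t : ℕ) (γ μ : ℝ) : Prop :=
  ∀ S : Finset (Fin n), (S.card : ℝ) ≤ γ * n →
    (t : ℝ) * (1 - μ) * S.card ≤ ((uniqueNbrs N S).card : ℝ)

/-- The bipartite graph `G_A` of a matrix, presented by neighbor sets of left vertices
(columns): the neighbors of `u ∈ V_L` are the rows `r` with `A r u ≠ 0`. -/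
noncomputable def matNbrs {m n : ℕ} (A : Matrix (Fin m) (Fin n) ℝ) : Fin n → Finset (Fin m) :=
  fun u => Finset.univ.filter (fun r => A r u ≠ 0)

/-- `A ∈ M_{m,n,s,t}`: entries in `{0, 1, -1}`, every row has exactly `s` nonzero entries,
and every column has exactly `t` nonzero entries. -/
def Biregular {m n : ℕ} (s t : ℕ) (A : Matrix (Fin m) (Fin n) ℝ) : Prop :=
  (∀ r u, A r u = 0 ∨ A r u = 1 ∨ A r u = -1) ∧
  (∀ r : Fin m, (Finset.univ.filter (fun u => A r u ≠ 0)).card = s) ∧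
  (∀ u : Fin n, (Finset.univ.filter (fun r => A r u ≠ 0)).card = t)

/-- The bipartite graph on `V_L ⊕ V_R` associated with left-neighbor data `N`. -/
def bipGraph {n m : ℕ} (N : Fin n → Finset (Fin m)) : SimpleGraph (Fin n ⊕ Fin m) where
  Adj x y :=
    match x, y with
    | Sum.inl u, Sum.inr r => r ∈ N u
    | Sum.inr r, Sum.inl u => r ∈ N u
    | _, _ => False
  symm := ⟨by rintro (u | r) (u' | r') h <;> first | exact h.elim | exact h⟩
  loopless := ⟨by rintro (u | r) h <;> exact h.elim⟩

/-- The ball of radius `ℓ` about `v` in a graph. -/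
def graphBall {V : Type*} (G : SimpleGraph V) (v : V) (ℓ : ℕ) : Set V :=
  {w | G.Reachable v w ∧ G.dist v w ≤ ℓ}

/-- The ball of radius `ℓ` about `v` contains no cycle. -/
def BallAcyclic {V : Type*} (G : SimpleGraph V) (v : V) (ℓ : ℕ) : Prop :=
  (SimpleGraph.induce (graphBall G v ℓ) G).IsAcyclic

/-- `𝒢_{m,n,s,t}`: the set of bipartite graphs on `V_L = Fin n`, `V_R = Fin m`
(presented by neighbor sets of left vertices) in which every left vertex has degree
exactly `t` and every right vertex has degree exactly `s`. -/
def GSet (m n s t : ℕ) : Finset (Fin n → Finset (Fin m)) :=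
  Finset.univ.filter (fun N => (∀ u, (N u).card = t) ∧ (∀ r, rightDeg N r = s))

/-- The edge set `F` is contained in the edge set of the graph given by `N`. -/
def edgesSubset {n m : ℕ} (F : Finset (Fin n × Fin m)) (N : Fin n → Finset (Fin m)) : Prop :=
  ∀ e ∈ F, e.2 ∈ N e.1

/-- The `ℓ₂ → ℓ₂` operator norm of a matrix. -/
noncomputable def l2OpNorm {m n : ℕ} (A : Matrix (Fin m) (Fin n) ℝ) : ℝ :=
  sSup {c | ∃ x : Fin n → ℝ, x ≠ 0 ∧ c = lpNorm 2 (A.mulVec x) / lpNorm 2 x}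
section AuxRIP

open Finset

private lemma aux_two_term {p l a b : ℝ} (hp : 1 ≤ p) (hl0 : 0 < l) (hl1 : l < 1)
    (ha : 0 ≤ a) (hb : 0 ≤ b) :
    (a + b) ^ p ≤ l ^ (1 - p) * a ^ p + (1 - l) ^ (1 - p) * b ^ p := by
  have hl1' : 0 < 1 - l := by linarith
  have h := Real.rpow_arith_mean_le_arith_mean_rpow (univ : Finset (Fin 2))
      ![l, 1 - l] ![a / l, b / (1 - l)] ?_ ?_ ?_ hp
  · simp only [Fin.sum_univ_two, Matrix.cons_val_zero, Matrix.cons_val_one, Matrix.head_cons] at h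
    rw [mul_div_cancel₀ _ hl0.ne', mul_div_cancel₀ _ hl1'.ne'] at h
    refine h.trans_eq ?_
    rw [Real.div_rpow ha hl0.le, Real.div_rpow hb hl1'.le]
    rw [Real.rpow_sub hl0 1 p, Real.rpow_sub hl1' 1 p, Real.rpow_one, Real.rpow_one]
    ring
  · intro i _; fin_cases i <;> simp <;> linarith
  · simp [Fin.sum_univ_two]
  · intro i _; fin_cases i <;> simp <;> positivity

private lemma aux_sum_rpow_le {ι : Type*} (T : Finset ι) (a : ι → ℝ) (ha : ∀ i ∈ T, 0 ≤ a i)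
    {p : ℝ} (hp : 1 ≤ p) {d : ℝ} (hd : (T.card : ℝ) ≤ d) :
    (∑ i ∈ T, a i) ^ p ≤ d ^ (p - 1) * ∑ i ∈ T, a i ^ p := by
  have hp0 : (0:ℝ) < p := by linarith
  rcases T.eq_empty_or_nonempty with rfl | hT
  · simp [Real.zero_rpow hp0.ne']
  · have hc : (0:ℝ) < T.card := by exact_mod_cast Finset.card_pos.mpr hT
    set c : ℝ := (T.card : ℝ) with hcdef
    have h := Real.rpow_arith_mean_le_arith_mean_rpow T (fun _ => 1 / c) a
        (fun i _ => by positivity) (by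
          rw [Finset.sum_const, nsmul_eq_mul]
          field_simp; exact hcdef.symm) ha hp
    have hsum : (∑ i ∈ T, (1 / c) * a i) = (1 / c) * ∑ i ∈ T, a i := by
      rw [Finset.mul_sum]
    have hsum2 : (∑ i ∈ T, (1 / c) * a i ^ p) = (1 / c) * ∑ i ∈ T, a i ^ p := by
      rw [Finset.mul_sum]
    rw [hsum, hsum2] at h
    have hSa : 0 ≤ ∑ i ∈ T, a i := Finset.sum_nonneg ha
    have hmul : ((1 / c) * ∑ i ∈ T, a i) ^ p = (1/c) ^ p * (∑ i ∈ T, a i) ^ p :=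
      Real.mul_rpow (by positivity) hSa
    rw [hmul] at h
    have key : (∑ i ∈ T, a i) ^ p ≤ c ^ (p - 1) * ∑ i ∈ T, a i ^ p := by
      have h2 : c ^ p * ((1/c) ^ p * (∑ i ∈ T, a i) ^ p) ≤ c ^ p * ((1/c) * ∑ i ∈ T, a i ^ p) := by
        apply mul_le_mul_of_nonneg_left h (Real.rpow_nonneg hc.le p)
      have h3 : c ^ p * (1/c) ^ p = 1 := by
        rw [← Real.mul_rpow hc.le (by positivity)]
        rw [mul_one_div_cancel hc.ne', Real.one_rpow]
      have h4 : c ^ p * (1/c) = c ^ (p-1) := by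
        rw [Real.rpow_sub hc p 1, Real.rpow_one]
        ring
      calc (∑ i ∈ T, a i) ^ p = c ^ p * (1/c) ^ p * (∑ i ∈ T, a i) ^ p := by rw [h3, one_mul]
        _ = c ^ p * ((1/c) ^ p * (∑ i ∈ T, a i) ^ p) := by ring
        _ ≤ c ^ p * ((1/c) * ∑ i ∈ T, a i ^ p) := h2
        _ = c ^ (p-1) * ∑ i ∈ T, a i ^ p := by rw [← mul_assoc, h4]
    refine key.trans ?_
    apply mul_le_mul_of_nonneg_right _ (Finset.sum_nonneg fun i hi => Real.rpow_nonneg (ha i hi) p)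
    exact Real.rpow_le_rpow hc.le hd (by linarith)

private lemma aux_lower_term {p l a b y : ℝ} (hp : 1 ≤ p) (hl0 : 0 < l) (hl1 : l < 1)
    (ha : 0 ≤ a) (hb : 0 ≤ b) (hy1 : a - b ≤ |y|) :
    l ^ (p - 1) * a ^ p - l ^ (p - 1) * (1 - l) ^ (1 - p) * b ^ p ≤ |y| ^ p := by
  have hm : max (a - b) 0 ≤ |y| := max_le hy1 (abs_nonneg y)
  have hm0 : 0 ≤ max (a - b) 0 := le_max_right _ _
  have hstep : a ^ p ≤ l ^ (1 - p) * (max (a - b) 0) ^ p + (1 - l) ^ (1 - p) * b ^ p := by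
    have haux : a ≤ max (a - b) 0 + b := by
      rcases le_total a b with h | h
      · simpa using h.trans (le_add_of_nonneg_left hm0)
      · have : a - b ≤ max (a-b) 0 := le_max_left _ _
        linarith
    calc a ^ p ≤ (max (a - b) 0 + b) ^ p :=
          Real.rpow_le_rpow ha haux (by linarith)
      _ ≤ l ^ (1 - p) * (max (a - b) 0) ^ p + (1 - l) ^ (1 - p) * b ^ p :=
          aux_two_term hp hl0 hl1 hm0 hb
  have hmono : (max (a - b) 0) ^ p ≤ |y| ^ p := Real.rpow_le_rpow hm0 hm (by linarith)
  have hcancel : l ^ (p - 1) * l ^ (1 - p) = 1 := by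
    rw [← Real.rpow_add hl0]; norm_num
  have := mul_le_mul_of_nonneg_left hstep (Real.rpow_nonneg hl0.le (p-1))
  rw [mul_add, ← mul_assoc, ← mul_assoc, hcancel, one_mul] at this
  nlinarith [Real.rpow_nonneg hl0.le (p-1), hmono,
    mul_le_mul_of_nonneg_left hmono (Real.rpow_nonneg hl0.le (p-1))]

private lemma aux_abel {n : ℕ} {κ : Type*} [LinearOrder κ] (key : Fin n → κ)
    (hinj : Function.Injective key) (c : Fin n → ℕ) (K : ℝ) :
    ∀ (S : Finset (Fin n)) (w : Fin n → ℝ), (∀ u ∈ S, 0 ≤ w u) →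
      (∀ u v, key u ≤ key v → w u ≤ w v) →
      (∀ T ⊆ S, (∀ u ∈ T, ∀ v ∈ S, v ∉ T → key v < key u) →
        ∑ u ∈ T, (c u : ℝ) ≤ K * T.card) →
      ∑ u ∈ S, (c u : ℝ) * w u ≤ K * ∑ u ∈ S, w u := by
  intro S
  induction S using Finset.strongInduction with
  | _ S ih =>
    intro w hw hmono hpre
    rcases S.eq_empty_or_nonempty with rfl | hS
    · simp
    obtain ⟨v, hvS, hvmin⟩ := S.exists_min_image key hS
    have hKS : ∑ u ∈ S, (c u : ℝ) ≤ K * S.card :=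
      hpre S (subset_refl S) (fun u hu v hv hvn => absurd hv hvn)
    set m := w v with hm
    have hm0 : 0 ≤ m := hw v hvS
    set S' := S.erase v with hS'def
    have hsub : S' ⊂ S := Finset.erase_ssubset hvS
    set w' := fun u => w u - m with hw'def
    have hw' : ∀ u ∈ S', 0 ≤ w' u := by
      intro u hu
      have h1 : key v ≤ key u := hvmin u (Finset.mem_of_mem_erase hu)
      have h2 := hmono v u h1
      simp only [hw'def]; linarith
    have hmono' : ∀ u v', key u ≤ key v' → w' u ≤ w' v' := by
      intro u v' h
      have := hmono u v' h; simp only [hw'def]; linarith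
    have hpre' : ∀ T ⊆ S', (∀ u ∈ T, ∀ v' ∈ S', v' ∉ T → key v' < key u) →
        ∑ u ∈ T, (c u : ℝ) ≤ K * T.card := by
      intro T hT hTpre
      apply hpre T (hT.trans (Finset.erase_subset _ _))
      intro u hu v' hv' hv'T
      by_cases hveq : v' = v
      · subst hveq
        have huS' : u ∈ S' := hT hu
        have hne : u ≠ v' := (Finset.mem_erase.mp huS').1
        exact lt_of_le_of_ne (hvmin u (Finset.mem_of_mem_erase huS'))
          (fun h => hne (hinj h).symm)
      · exact hTpre u hu v' (Finset.mem_erase.mpr ⟨hveq, hv'⟩) hv'T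
    have IH := ih S' hsub w' hw' hmono' hpre'
    have hA : ∑ u ∈ S, (c u : ℝ) * w u
        = ∑ u ∈ S, (c u : ℝ) * w' u + m * ∑ u ∈ S, (c u : ℝ) := by
      rw [Finset.mul_sum, ← Finset.sum_add_distrib]
      exact Finset.sum_congr rfl (fun u _ => by simp only [hw'def]; ring)
    have hB : ∑ u ∈ S, (c u : ℝ) * w' u = ∑ u ∈ S', (c u : ℝ) * w' u := by
      rw [hS'def, Finset.sum_erase_eq_sub hvS]
      simp [hw'def, hm]
    have hC : ∑ u ∈ S', w' u = ∑ u ∈ S, w u - m * S.card := by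
      rw [hS'def, Finset.sum_erase_eq_sub hvS]
      have h9 : ∑ u ∈ S, w' u = ∑ u ∈ S, w u - S.card * m := by
        simp only [hw'def, Finset.sum_sub_distrib, Finset.sum_const, nsmul_eq_mul]
      rw [h9]
      simp only [hw'def]
      ring
    have hC' : K * ∑ u ∈ S', w' u = K * (∑ u ∈ S, w u - m * S.card) := by rw [hC]
    have hD : m * ∑ u ∈ S, (c u : ℝ) ≤ m * (K * S.card) :=
      mul_le_mul_of_nonneg_left hKS hm0
    have hE : K * (∑ u ∈ S, w u - m * S.card) + m * (K * S.card) = K * ∑ u ∈ S, w u := by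
      ring
    linarith [hA, hB, IH, hD, hC', hE]

private lemma aux_swap {n m : ℕ} (QQ : Fin n → Fin m → Prop) [∀ u r, Decidable (QQ u r)]
    (w : Fin n → ℝ) :
    ∑ r : Fin m, ∑ u ∈ univ.filter (fun u => QQ u r), w u
      = ∑ u : Fin n, ((univ.filter (fun r => QQ u r)).card : ℝ) * w u := by
  have h1 : ∀ r, ∑ u ∈ univ.filter (fun u => QQ u r), w u
      = ∑ u : Fin n, if QQ u r then w u else 0 := fun r => Finset.sum_filter _ _
  simp_rw [h1]
  rw [Finset.sum_comm]
  refine Finset.sum_congr rfl (fun u _ => ?_)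
  rw [← Finset.sum_filter, Finset.sum_const, nsmul_eq_mul]

private lemma aux_mu0 {a b μ : ℝ} (h1 : a * (1-μ) ≤ b) (h2 : b ≤ a) (h3 : 1 ≤ a) : 0 ≤ μ := by
  nlinarith

private lemma aux_mu1 {e μ : ℝ} (he0 : 0 < e) (he1 : e ≤ 1) (h : μ ≤ e^2/9) : μ ≤ 1/9 := by
  nlinarith

private lemma aux_key2 {e ν : ℝ} (he0 : 0 < e) (he1 : e ≤ 1) (hν0 : 0 ≤ ν)
    (hν : ν ≤ e^2/9) : ((2+e)/e) * ν ≤ e/3 := by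
  rw [div_mul_eq_mul_div, div_le_div_iff₀ he0 (by norm_num : (0:ℝ) < 3)]
  nlinarith

private lemma aux_sc {e μ : ℝ} (he0 : 0 < e) (he1 : e ≤ 1) (hμ0 : 0 ≤ μ)
    (hμ9 : μ ≤ e^2/9) : (1 - e) + e/3 ≤ (2/(2+e)) * (1-μ) := by
  rw [div_mul_eq_mul_div, le_div_iff₀ (by linarith : (0:ℝ) < 2+e)]
  nlinarith

private lemma aux_h6 {e X : ℝ} (he : 0 ≤ e) (hX : 0 ≤ X) :
    (1 + e/2) * X + (e/3) * X ≤ (1+e) * X := by nlinarith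

end AuxRIP

set_option maxHeartbeats 1600000

/-- **ℓ_p-RIP of expander graphs.** If `G` is a bipartite `t`-left-regular `(γ, μ)`-unique
expander with max right degree `s_max`, `B` is a signed adjacency matrix of `G`,
`0 < ε ≤ 1`, `1 ≤ p < 2` and `ε² ≥ 9 μ s_max^(p-1)`, then `B` is `(γn, ε)`-`ℓ_p`-RIP with
normalization `t^(1/p)`. -/
theorem expansion_to_RIP {n m : ℕ} (t smax : ℕ) (γ μ : ℝ)
    (N : Fin n → Finset (Fin m))
    (hreg : LeftRegular N t) (hexp : UniqueExpander N t γ μ)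
    (hsmax : ∀ r : Fin m, rightDeg N r ≤ smax)
    (B : Matrix (Fin m) (Fin n) ℝ)
    (hsign : ∀ r u, B r u = 0 ∨ B r u = 1 ∨ B r u = -1)
    (hadj : ∀ r u, B r u ≠ 0 ↔ r ∈ N u)
    (ε p : ℝ) (hε0 : 0 < ε) (hε1 : ε ≤ 1) (hp1 : 1 ≤ p) (hp2 : p < 2)
    (hcond : ε ^ 2 ≥ 9 * μ * (smax : ℝ) ^ (p - 1)) :
    ∀ x : Fin n → ℝ, Sparse (γ * n) x →
      (t : ℝ) ^ (1 / p) * (1 - ε) * lpNorm p x ≤ lpNorm p (B.mulVec x) ∧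
      lpNorm p (B.mulVec x) ≤ (t : ℝ) ^ (1 / p) * (1 + ε) * lpNorm p x := by
  intro x hx
  classical
  have hp0 : (0:ℝ) < p := by linarith
  have hpne : p ≠ 0 := hp0.ne'
  have hinvp : (0:ℝ) < 1/p := by positivity
  have hlpy0 : 0 ≤ lpNorm p (B.mulVec x) :=
    Real.rpow_nonneg (Finset.sum_nonneg fun i _ => Real.rpow_nonneg (abs_nonneg _) _) _
  have hlpx0 : 0 ≤ lpNorm p x :=
    Real.rpow_nonneg (Finset.sum_nonneg fun i _ => Real.rpow_nonneg (abs_nonneg _) _) _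
  by_cases hxz : ∀ u, x u = 0
  · have hx0 : x = 0 := funext hxz
    have h1 : lpNorm p x = 0 := by
      simp [lpNorm, hx0, Real.zero_rpow hpne, Real.zero_rpow (one_div_ne_zero hpne), Real.zero_rpow (inv_ne_zero hpne)]
    have h2 : B.mulVec x = 0 := by rw [hx0, Matrix.mulVec_zero]
    have h3 : lpNorm p (B.mulVec x) = 0 := by
      simp [lpNorm, h2, Real.zero_rpow hpne, Real.zero_rpow (one_div_ne_zero hpne), Real.zero_rpow (inv_ne_zero hpne)]
    constructor
    · rw [h1, h3]; simp
    · rw [h1, h3]; simp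
  by_cases ht0 : t = 0
  · have hNe : ∀ u, N u = ∅ := fun u => Finset.card_eq_zero.mp (by rw [hreg u, ht0])
    have hB0 : ∀ r u, B r u = 0 := by
      intro r u; by_contra h
      have hmem := (hadj r u).mp h
      rw [hNe u] at hmem; exact absurd hmem (Finset.notMem_empty r)
    have h2 : B.mulVec x = 0 := by
      funext r
      simp [Matrix.mulVec, dotProduct, hB0]
    have h3 : lpNorm p (B.mulVec x) = 0 := by
      simp [lpNorm, h2, Real.zero_rpow hpne, Real.zero_rpow (one_div_ne_zero hpne), Real.zero_rpow (inv_ne_zero hpne)]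
    have h4 : ((t:ℝ)) ^ (1/p) = 0 := by
      rw [ht0]; simp [Real.zero_rpow (one_div_ne_zero hpne), Real.zero_rpow (inv_ne_zero hpne)]
    constructor
    · rw [h3, h4]; simp
    · rw [h3, h4]; simp
  -- main case
  push_neg at hxz
  obtain ⟨u0, hu0⟩ := hxz
  have ht1 : 1 ≤ t := Nat.one_le_iff_ne_zero.mpr ht0
  have htR : (1:ℝ) ≤ (t:ℝ) := by exact_mod_cast ht1
  set S0 : Finset (Fin n) := univ.filter (fun u => x u ≠ 0) with hS0def
  have hu0S0 : u0 ∈ S0 := by simp [hS0def, hu0]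
  have hS0γ : (S0.card : ℝ) ≤ γ * n := by
    have hsupp : Function.support x = ↑S0 := by
      ext u; simp [hS0def, Function.mem_support]
    have hxx := hx
    rw [Sparse, hsupp, Set.ncard_coe_finset] at hxx
    exact hxx
  set w : Fin n → ℝ := fun u => |x u| ^ p with hwdef
  have hw0 : ∀ u, 0 ≤ w u := fun u => Real.rpow_nonneg (abs_nonneg _) _
  have hwz : ∀ u, x u = 0 → w u = 0 := fun u h => by
    simp [hwdef, h, Real.zero_rpow hpne]
  set key : Fin n → ℝ ×ₗ Fin n := fun u => toLex (|x u|, u) with hkeydef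
  have hkinj : Function.Injective key := by
    intro a b h
    have h2 := congrArg (fun z => (ofLex z).2) h
    simpa [hkeydef] using h2
  have hkmono : ∀ u v, key u ≤ key v → |x u| ≤ |x v| := by
    intro u v h
    rcases (Prod.Lex.le_iff).mp h with h1 | ⟨h1, _⟩
    · exact le_of_lt h1
    · exact le_of_eq h1
  set P : Fin n → Fin m → Prop := fun u r => ∃ u', x u' ≠ 0 ∧ r ∈ N u' ∧ key u < key u'
    with hPdef
  set c : Fin n → ℕ := fun u => ((N u).filter (fun r => P u r)).card with hcdef
  set nc : Fin n → ℕ := fun u => ((N u).filter (fun r => ¬ P u r)).card with hncdef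
  have hcnc : ∀ u, c u + nc u = t := by
    intro u
    simp only [hcdef, hncdef]
    rw [Finset.card_filter_add_card_filter_not, hreg u]
  set Tr : Fin m → Finset (Fin n) := fun r => univ.filter (fun u => x u ≠ 0 ∧ r ∈ N u)
    with hTrdef
  set TOP : Fin m → Finset (Fin n) := fun r => (Tr r).filter (fun u => ¬ P u r) with hTOPdef
  set CR : Fin m → Finset (Fin n) := fun r => (Tr r).filter (fun u => P u r) with hCRdef
  set av : Fin m → ℝ := fun r => ∑ u ∈ TOP r, |x u| with havdef
  set coll : Fin m → ℝ := fun r => ∑ u ∈ CR r, |x u| with hcolldef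
  have hav0 : ∀ r, 0 ≤ av r := fun r => Finset.sum_nonneg fun u _ => abs_nonneg _
  have hcoll0 : ∀ r, 0 ≤ coll r := fun r => Finset.sum_nonneg fun u _ => abs_nonneg _
  have hmemTr : ∀ r u, u ∈ Tr r ↔ (x u ≠ 0 ∧ r ∈ N u) := by
    intro r u; simp [hTrdef]
  have habs1 : ∀ r u, u ∈ Tr r → |B r u * x u| = |x u| := by
    intro r u hu
    obtain ⟨hxu, hru⟩ := (hmemTr r u).mp hu
    have hBne : B r u ≠ 0 := (hadj r u).mpr hru
    rcases hsign r u with h | h | h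
    · exact absurd h hBne
    · rw [h, one_mul]
    · rw [h, abs_mul]; simp
  have hysplit : ∀ r, B.mulVec x r
      = (∑ u ∈ TOP r, B r u * x u) + ∑ u ∈ CR r, B r u * x u := by
    intro r
    have h1 : B.mulVec x r = ∑ u, B r u * x u := by
      simp [Matrix.mulVec, dotProduct]
    have h2 : ∑ u ∈ Tr r, B r u * x u = ∑ u, B r u * x u := by
      rw [hTrdef]
      apply Finset.sum_filter_of_ne
      intro u _ hne
      constructor
      · intro hxu; rw [hxu, mul_zero] at hne; exact hne rfl
      · refine (hadj r u).mp ?_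
        intro hB; rw [hB, zero_mul] at hne; exact hne rfl
    have h3 := Finset.sum_filter_add_sum_filter_not (Tr r) (fun u => P u r)
      (fun u => B r u * x u)
    rw [h1, ← h2, ← h3, hTOPdef, hCRdef]
    ring
  have hTOPcard : ∀ r, (TOP r).card ≤ 1 := by
    intro r
    refine Finset.card_le_one.mpr (fun u hu v hv => ?_)
    rw [hTOPdef, Finset.mem_filter] at hu hv
    obtain ⟨huT, hunP⟩ := hu
    obtain ⟨hvT, hvnP⟩ := hv
    obtain ⟨hxu, hru⟩ := (hmemTr r u).mp huT
    obtain ⟨hxv, hrv⟩ := (hmemTr r v).mp hvT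
    have h1 : key v ≤ key u := not_lt.mp (fun h => hunP ⟨v, hxv, hrv, h⟩)
    have h2 : key u ≤ key v := not_lt.mp (fun h => hvnP ⟨u, hxu, hru, h⟩)
    exact hkinj (le_antisymm h2 h1)
  have hatop : ∀ r, |∑ u ∈ TOP r, B r u * x u| = av r := by
    intro r
    rcases (TOP r).eq_empty_or_nonempty with he | hne
    · simp [havdef, he]
    · have hc1 : (TOP r).card = 1 := le_antisymm (hTOPcard r) (Finset.card_pos.mpr hne)
      obtain ⟨u, hu⟩ := Finset.card_eq_one.mp hc1
      have huT : u ∈ Tr r := Finset.filter_subset _ _ (hu ▸ Finset.mem_singleton_self u)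
      simp only [havdef, hu, Finset.sum_singleton]
      exact habs1 r u huT
  have hcoll_le : ∀ r, |∑ u ∈ CR r, B r u * x u| ≤ coll r := by
    intro r
    calc |∑ u ∈ CR r, B r u * x u| ≤ ∑ u ∈ CR r, |B r u * x u| :=
          Finset.abs_sum_le_sum_abs _ _
      _ = coll r := Finset.sum_congr rfl
          (fun u hu => habs1 r u (Finset.filter_subset _ _ hu))
  have hrow_ub : ∀ r, |B.mulVec x r| ≤ av r + coll r := by
    intro r
    rw [hysplit r]
    calc |(∑ u ∈ TOP r, B r u * x u) + ∑ u ∈ CR r, B r u * x u|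
        ≤ |∑ u ∈ TOP r, B r u * x u| + |∑ u ∈ CR r, B r u * x u| := abs_add_le _ _
      _ ≤ av r + coll r := by rw [hatop r]; exact add_le_add le_rfl (hcoll_le r)
  have hrow_lb : ∀ r, av r - coll r ≤ |B.mulVec x r| := by
    intro r
    rw [hysplit r]
    have h1 := abs_add_le ((∑ u ∈ TOP r, B r u * x u) + ∑ u ∈ CR r, B r u * x u)
      (-(∑ u ∈ CR r, B r u * x u))
    rw [add_neg_cancel_right, abs_neg] at h1
    have h2 := hcoll_le r
    have h3 := hatop r
    linarith
  -- counting
  have hTOPeq : ∀ r, TOP r = univ.filter (fun u => (x u ≠ 0 ∧ r ∈ N u) ∧ ¬ P u r) := by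
    intro r; simp only [hTOPdef, hTrdef, Finset.filter_filter]
  have hCReq : ∀ r, CR r = univ.filter (fun u => (x u ≠ 0 ∧ r ∈ N u) ∧ P u r) := by
    intro r; simp only [hCRdef, hTrdef, Finset.filter_filter]
  have hnc_card : ∀ u, x u ≠ 0 →
      (univ.filter (fun r => (x u ≠ 0 ∧ r ∈ N u) ∧ ¬ P u r)) = (N u).filter (fun r => ¬ P u r) := by
    intro u hxu; ext r
    simp [Finset.mem_filter, hxu]
  have hc_card : ∀ u, x u ≠ 0 →
      (univ.filter (fun r => (x u ≠ 0 ∧ r ∈ N u) ∧ P u r)) = (N u).filter (fun r => P u r) := by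
    intro u hxu; ext r
    simp [Finset.mem_filter, hxu]
  have hA1 : ∑ r, ∑ u ∈ TOP r, w u = ∑ u, (nc u : ℝ) * w u := by
    have hswap := aux_swap (fun u r => (x u ≠ 0 ∧ r ∈ N u) ∧ ¬ P u r) w
    calc ∑ r, ∑ u ∈ TOP r, w u
        = ∑ r, ∑ u ∈ univ.filter (fun u => (x u ≠ 0 ∧ r ∈ N u) ∧ ¬ P u r), w u := by
          refine Finset.sum_congr rfl (fun r _ => ?_); rw [hTOPeq r]
      _ = ∑ u, ((univ.filter (fun r => (x u ≠ 0 ∧ r ∈ N u) ∧ ¬ P u r)).card : ℝ) * w u := hswap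
      _ = ∑ u, (nc u : ℝ) * w u := by
          refine Finset.sum_congr rfl (fun u _ => ?_)
          by_cases hxu : x u = 0
          · rw [hwz u hxu]; ring
          · rw [hnc_card u hxu]
  have hE1 : ∑ r, ∑ u ∈ CR r, w u = ∑ u, (c u : ℝ) * w u := by
    have hswap := aux_swap (fun u r => (x u ≠ 0 ∧ r ∈ N u) ∧ P u r) w
    calc ∑ r, ∑ u ∈ CR r, w u
        = ∑ r, ∑ u ∈ univ.filter (fun u => (x u ≠ 0 ∧ r ∈ N u) ∧ P u r), w u := by
          refine Finset.sum_congr rfl (fun r _ => ?_); rw [hCReq r]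
      _ = ∑ u, ((univ.filter (fun r => (x u ≠ 0 ∧ r ∈ N u) ∧ P u r)).card : ℝ) * w u := hswap
      _ = ∑ u, (c u : ℝ) * w u := by
          refine Finset.sum_congr rfl (fun u _ => ?_)
          by_cases hxu : x u = 0
          · rw [hwz u hxu]; ring
          · rw [hc_card u hxu]
  have hav_pow : ∀ r, (av r) ^ p = ∑ u ∈ TOP r, w u := by
    intro r
    rcases (TOP r).eq_empty_or_nonempty with he | hne
    · simp [havdef, he, Real.zero_rpow hpne]
    · have hc1 : (TOP r).card = 1 := le_antisymm (hTOPcard r) (Finset.card_pos.mpr hne)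
      obtain ⟨u, hu⟩ := Finset.card_eq_one.mp hc1
      simp [havdef, hu, hwdef]
  set W : ℝ := ∑ u, w u with hWdef
  set E : ℝ := ∑ u, (c u : ℝ) * w u with hEdef
  set A : ℝ := ∑ r, (av r) ^ p with hAdef
  set CC : ℝ := ∑ r, (coll r) ^ p with hCCdef
  have hW0 : 0 ≤ W := Finset.sum_nonneg fun u _ => hw0 u
  have hE0 : 0 ≤ E := Finset.sum_nonneg fun u _ =>
    mul_nonneg (Nat.cast_nonneg _) (hw0 u)
  have hA0 : 0 ≤ A := Finset.sum_nonneg fun r _ => Real.rpow_nonneg (hav0 r) _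
  have hCC0 : 0 ≤ CC := Finset.sum_nonneg fun r _ => Real.rpow_nonneg (hcoll0 r) _
  have hAeq : A = ∑ u, (nc u : ℝ) * w u := by
    rw [hAdef]
    rw [Finset.sum_congr rfl (fun r _ => hav_pow r)]
    exact hA1
  have hAE : A = (t:ℝ) * W - E := by
    rw [hAeq, hEdef, hWdef, Finset.mul_sum, ← Finset.sum_sub_distrib]
    refine Finset.sum_congr rfl (fun u _ => ?_)
    have h1 : (c u : ℝ) + (nc u : ℝ) = (t : ℝ) := by exact_mod_cast hcnc u
    have h2 : (nc u : ℝ) = (t:ℝ) - (c u : ℝ) := by linarith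
    rw [h2]; ring
  -- CC bound
  have hCR_card : ∀ r, ((CR r).card : ℝ) ≤ (smax : ℝ) := by
    intro r
    have hsub : CR r ⊆ univ.filter (fun u => r ∈ N u) := by
      intro u hu
      rw [hCRdef, Finset.mem_filter] at hu
      obtain ⟨huT, -⟩ := hu
      obtain ⟨-, hru⟩ := (hmemTr r u).mp huT
      exact Finset.mem_filter.mpr ⟨Finset.mem_univ _, hru⟩
    have h1 : (CR r).card ≤ rightDeg N r := Finset.card_le_card hsub
    have h2 := hsmax r
    exact_mod_cast h1.trans h2
  have hcoll_pow : ∀ r, (coll r) ^ p ≤ (smax : ℝ) ^ (p-1) * ∑ u ∈ CR r, w u := by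
    intro r
    have h := aux_sum_rpow_le (CR r) (fun u => |x u|) (fun u _ => abs_nonneg _) hp1 (hCR_card r)
    simp only [hcolldef, hwdef]
    exact h
  have hCCE : CC ≤ (smax : ℝ) ^ (p-1) * E := by
    calc CC ≤ ∑ r, (smax : ℝ) ^ (p-1) * ∑ u ∈ CR r, w u :=
          Finset.sum_le_sum (fun r _ => hcoll_pow r)
      _ = (smax : ℝ) ^ (p-1) * ∑ r, ∑ u ∈ CR r, w u := by rw [Finset.mul_sum]
      _ = (smax : ℝ) ^ (p-1) * E := by rw [hE1, hEdef]
  -- Abel / expansion bound on E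
  have hpre : ∀ T ⊆ S0, (∀ u ∈ T, ∀ v ∈ S0, v ∉ T → key v < key u) →
      ∑ u ∈ T, (c u : ℝ) ≤ ((t:ℝ) * μ) * T.card := by
    intro T hTS hTpre
    have hTγ : (T.card : ℝ) ≤ γ * n := by
      have := Finset.card_le_card hTS
      have h2 : (T.card : ℝ) ≤ (S0.card : ℝ) := by exact_mod_cast this
      linarith [hS0γ]
    have hcover : nbrs N T ⊆ T.biUnion (fun u => (N u).filter (fun r => ¬ P u r)) := by
      intro r hr
      obtain ⟨v0, hv0T, hrv0⟩ := Finset.mem_biUnion.mp hr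
      have hQne : (T.filter (fun u => r ∈ N u)).Nonempty :=
        ⟨v0, Finset.mem_filter.mpr ⟨hv0T, hrv0⟩⟩
      obtain ⟨us, husQ, husmax⟩ := (T.filter (fun u => r ∈ N u)).exists_max_image key hQne
      obtain ⟨husT, hrus⟩ := Finset.mem_filter.mp husQ
      refine Finset.mem_biUnion.mpr ⟨us, husT, Finset.mem_filter.mpr ⟨hrus, ?_⟩⟩
      rintro ⟨u', hxu', hru', hlt⟩
      by_cases hu'T : u' ∈ T
      · exact absurd hlt (not_lt.mpr (husmax u' (Finset.mem_filter.mpr ⟨hu'T, hru'⟩)))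
      · have hu'S0 : u' ∈ S0 := Finset.mem_filter.mpr ⟨Finset.mem_univ _, hxu'⟩
        exact lt_asymm hlt (hTpre us husT u' hu'S0 hu'T)
    have h1 : ((nbrs N T).card : ℝ) ≤ ∑ u ∈ T, (nc u : ℝ) := by
      have hb := (Finset.card_le_card hcover).trans (Finset.card_biUnion_le)
      have hb2 : ((nbrs N T).card : ℝ)
          ≤ ((∑ u ∈ T, ((N u).filter (fun r => ¬ P u r)).card : ℕ) : ℝ) := by
        exact_mod_cast hb
      rw [Nat.cast_sum] at hb2
      exact hb2
    have h2 := hexp T hTγ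
    have h3 : ((uniqueNbrs N T).card : ℝ) ≤ ((nbrs N T).card : ℝ) := by
      exact_mod_cast Finset.card_le_card (Finset.filter_subset _ _)
    have h4 : ∑ u ∈ T, (c u : ℝ) = (t:ℝ) * T.card - ∑ u ∈ T, (nc u : ℝ) := by
      have h5 : ∀ u ∈ T, (c u : ℝ) = (t:ℝ) - (nc u : ℝ) := by
        intro u _
        have h6 : (c u : ℝ) + (nc u : ℝ) = (t : ℝ) := by exact_mod_cast hcnc u
        linarith
      rw [Finset.sum_congr rfl h5, Finset.sum_sub_distrib, Finset.sum_const, nsmul_eq_mul]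
      ring
    rw [h4]
    have hr : (t:ℝ) * (1-μ) * (T.card : ℝ) = (t:ℝ) * (T.card:ℝ) - (t:ℝ) * μ * (T.card:ℝ) := by
      ring
    rw [hr] at h2
    linarith [h1, h2, h3]
  have hmono : ∀ u v, key u ≤ key v → w u ≤ w v := fun u v h =>
    Real.rpow_le_rpow (abs_nonneg _) (hkmono u v h) hp0.le
  have hAbel := aux_abel key hkinj c ((t:ℝ) * μ) S0 w (fun u _ => hw0 u) hmono hpre
  have hWS0 : ∑ u ∈ S0, w u = W := by
    rw [hS0def, hWdef]
    exact Finset.sum_filter_of_ne (fun u _ hne hx0 => hne (hwz u hx0))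
  have hES0 : ∑ u ∈ S0, (c u : ℝ) * w u = E := by
    rw [hS0def, hEdef]
    refine Finset.sum_filter_of_ne (fun u _ hne => ?_)
    intro hx0
    rw [hwz u hx0, mul_zero] at hne
    exact hne rfl
  have hE_ub : E ≤ (t:ℝ) * μ * W := by
    rw [← hES0, ← hWS0]
    exact hAbel
  -- numeric facts
  have hμ0 : 0 ≤ μ := by
    have h1 : (1:ℝ) ≤ (S0.card : ℝ) := by
      exact_mod_cast Finset.one_le_card.mpr ⟨u0, hu0S0⟩
    have h2 := hexp {u0} (by rw [Finset.card_singleton]; push_cast; linarith [hS0γ])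
    have h3 : nbrs N {u0} = N u0 := Finset.singleton_biUnion
    have h4 : ((uniqueNbrs N {u0}).card : ℝ) ≤ (t:ℝ) := by
      have hs : uniqueNbrs N {u0} ⊆ N u0 := by
        rw [uniqueNbrs, h3]; exact Finset.filter_subset _ _
      have := Finset.card_le_card hs
      rw [hreg u0] at this
      exact_mod_cast this
    rw [Finset.card_singleton] at h2
    push_cast at h2
    exact aux_mu0 (by linarith [h2] : (t:ℝ) * (1-μ) ≤ ((uniqueNbrs N {u0}).card : ℝ)) h4 htR
  have hsmax1 : (1:ℝ) ≤ (smax : ℝ) := by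
    have hne : (N u0).Nonempty := Finset.card_pos.mp (by rw [hreg u0]; exact ht1)
    obtain ⟨r0, hr0⟩ := hne
    have h1 : 1 ≤ rightDeg N r0 := Finset.card_pos.mpr
      ⟨u0, Finset.mem_filter.mpr ⟨Finset.mem_univ _, hr0⟩⟩
    have := h1.trans (hsmax r0)
    exact_mod_cast this
  have hsm_pow0 : 0 ≤ (smax : ℝ) ^ (p-1) := Real.rpow_nonneg (by positivity) _
  have hsm_pow1 : (1:ℝ) ≤ (smax : ℝ) ^ (p-1) := Real.one_le_rpow hsmax1 (by linarith)
  set ν : ℝ := μ * (smax : ℝ) ^ (p-1) with hνdef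
  have hν_ub : ν ≤ ε^2/9 := by rw [hνdef]; linarith [hcond]
  have hν0 : 0 ≤ ν := mul_nonneg hμ0 hsm_pow0
  have hμ9 : μ ≤ ε^2/9 := by
    have := le_mul_of_one_le_right hμ0 hsm_pow1
    rw [← hνdef] at this
    linarith [hν_ub]
  have hμ1 : μ ≤ 1/9 := aux_mu1 hε0 hε1 hμ9
  have htW0 : 0 ≤ (t:ℝ) * W := mul_nonneg (by positivity) hW0
  have hAub : A ≤ (t:ℝ) * W := by rw [hAE]; linarith [hE0]
  have hAlb : (t:ℝ) * (1-μ) * W ≤ A := by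
    rw [hAE]
    have hr : (t:ℝ) * (1-μ) * W = (t:ℝ) * W - (t:ℝ) * μ * W := by ring
    rw [hr]
    linarith [hE_ub]
  have hCCub : CC ≤ ν * ((t:ℝ) * W) := by
    calc CC ≤ (smax : ℝ) ^ (p-1) * E := hCCE
      _ ≤ (smax : ℝ) ^ (p-1) * ((t:ℝ) * μ * W) := mul_le_mul_of_nonneg_left hE_ub hsm_pow0
      _ = ν * ((t:ℝ) * W) := by rw [hνdef]; ring
  -- the parameter l
  set l : ℝ := 2/(2+ε) with hldef
  have hden : (0:ℝ) < 2 + ε := by linarith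
  have hl0 : 0 < l := by rw [hldef]; positivity
  have hl1 : l < 1 := by rw [hldef, div_lt_one hden]; linarith
  have h1l : 1 - l = ε/(2+ε) := by rw [hldef]; field_simp; ring
  have h1l0 : 0 < 1 - l := by rw [h1l]; positivity
  have hL1 : l ^ (1-p) ≤ 1 + ε/2 := by
    have h := Real.rpow_le_rpow_of_exponent_ge hl0 hl1.le (show (-1:ℝ) ≤ 1-p by linarith)
    have h2 : l ^ (-1:ℝ) = 1 + ε/2 := by
      rw [Real.rpow_neg_one, hldef]
      rw [inv_div]
      ring
    linarith [h, h2.symm.le, h2.le]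
  have hL2 : (1-l) ^ (1-p) ≤ (2+ε)/ε := by
    have h := Real.rpow_le_rpow_of_exponent_ge h1l0 (by linarith) (show (-1:ℝ) ≤ 1-p by linarith)
    have h2 : (1-l) ^ (-1:ℝ) = (2+ε)/ε := by
      rw [Real.rpow_neg_one, h1l, inv_div]
    linarith [h, h2.le]
  have hL3 : l ≤ l ^ (p-1) := by
    have h := Real.rpow_le_rpow_of_exponent_ge hl0 hl1.le (show p-1 ≤ (1:ℝ) by linarith)
    rwa [Real.rpow_one] at h
  have hL4 : l ^ (p-1) ≤ 1 := Real.rpow_le_one hl0.le hl1.le (by linarith)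
  have hL10 : 0 ≤ l ^ (1-p) := Real.rpow_nonneg hl0.le _
  have hL20 : 0 ≤ (1-l) ^ (1-p) := Real.rpow_nonneg h1l0.le _
  have hL30 : 0 ≤ l ^ (p-1) := Real.rpow_nonneg hl0.le _
  -- sums of row estimates
  set SUM : ℝ := ∑ r, |B.mulVec x r| ^ p with hSUMdef
  have hSU : SUM ≤ l ^ (1-p) * A + (1-l) ^ (1-p) * CC := by
    calc SUM ≤ ∑ r, (l ^ (1-p) * (av r) ^ p + (1-l) ^ (1-p) * (coll r) ^ p) := by
          rw [hSUMdef]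
          refine Finset.sum_le_sum (fun r _ => ?_)
          calc |B.mulVec x r| ^ p ≤ (av r + coll r) ^ p :=
                Real.rpow_le_rpow (abs_nonneg _) (hrow_ub r) hp0.le
            _ ≤ _ := aux_two_term hp1 hl0 hl1 (hav0 r) (hcoll0 r)
      _ = l ^ (1-p) * A + (1-l) ^ (1-p) * CC := by
          rw [Finset.sum_add_distrib, ← Finset.mul_sum, ← Finset.mul_sum, hAdef, hCCdef]
  have hSL : l ^ (p-1) * A - l ^ (p-1) * (1-l) ^ (1-p) * CC ≤ SUM := by
    have h := Finset.sum_le_sum (s := (univ : Finset (Fin m)))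
      (f := fun r => l ^ (p-1) * (av r) ^ p - l ^ (p-1) * (1-l) ^ (1-p) * (coll r) ^ p)
      (g := fun r => |B.mulVec x r| ^ p)
      (fun r _ => aux_lower_term hp1 hl0 hl1 (hav0 r) (hcoll0 r) (hrow_lb r))
    rw [Finset.sum_sub_distrib, ← Finset.mul_sum, ← Finset.mul_sum] at h
    rw [hSUMdef, hAdef, hCCdef]
    exact h
  have hkey2 : ((2+ε)/ε) * ν ≤ ε/3 := aux_key2 hε0 hε1 hν0 hν_ub
  -- upper bound
  have h1εp : (1+ε) ≤ (1+ε) ^ p := by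
    have h := Real.rpow_le_rpow_of_exponent_le (show (1:ℝ) ≤ 1+ε by linarith) hp1
    rwa [Real.rpow_one] at h
  have hupper : SUM ≤ (t:ℝ) * (1+ε) ^ p * W := by
    have hstep1 : l ^ (1-p) * A + (1-l) ^ (1-p) * CC
        ≤ (1 + ε/2) * ((t:ℝ) * W) + ((2+ε)/ε) * (ν * ((t:ℝ) * W)) :=
      add_le_add (mul_le_mul hL1 hAub hA0 (by positivity))
        (mul_le_mul hL2 hCCub hCC0 (by positivity))
    have h5 : ((2+ε)/ε) * (ν * ((t:ℝ) * W)) ≤ (ε/3) * ((t:ℝ) * W) := by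
      rw [← mul_assoc]
      exact mul_le_mul_of_nonneg_right hkey2 htW0
    have h6 : (1 + ε/2) * ((t:ℝ) * W) + (ε/3) * ((t:ℝ) * W) ≤ (1+ε) * ((t:ℝ) * W) :=
      aux_h6 hε0.le htW0
    have h7 : (1+ε) * ((t:ℝ) * W) ≤ (1+ε) ^ p * ((t:ℝ) * W) :=
      mul_le_mul_of_nonneg_right h1εp htW0
    calc SUM ≤ l ^ (1-p) * A + (1-l) ^ (1-p) * CC := hSU
      _ ≤ (1 + ε/2) * ((t:ℝ) * W) + ((2+ε)/ε) * (ν * ((t:ℝ) * W)) := hstep1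
      _ ≤ (1 + ε/2) * ((t:ℝ) * W) + (ε/3) * ((t:ℝ) * W) := by linarith [h5]
      _ ≤ (1+ε) * ((t:ℝ) * W) := h6
      _ ≤ (1+ε) ^ p * ((t:ℝ) * W) := h7
      _ = (t:ℝ) * (1+ε) ^ p * W := by ring
  -- lower bound
  have h1εp' : (1-ε) ^ p ≤ 1-ε := by
    rcases eq_or_lt_of_le hε1 with heq | hlt
    · rw [← heq]
      norm_num
      rw [Real.zero_rpow hpne]
    · have h0 : 0 < 1 - ε := by linarith
      have h := Real.rpow_le_rpow_of_exponent_ge h0 (by linarith) hp1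
      rwa [Real.rpow_one] at h
  have hsc : (1 - ε) + ε/3 ≤ l * (1-μ) := by
    rw [hldef]
    exact aux_sc hε0 hε1 hμ0 hμ9
  have hlower : (t:ℝ) * (1-ε) ^ p * W ≤ SUM := by
    have htμW0 : 0 ≤ (t:ℝ) * (1-μ) * W := by
      apply mul_nonneg (mul_nonneg (by positivity) (by linarith)) hW0
    have h6 : l * ((t:ℝ) * (1-μ) * W) ≤ l ^ (p-1) * A :=
      mul_le_mul hL3 hAlb htμW0 hL30
    have h7 : l ^ (p-1) * (1-l) ^ (1-p) * CC ≤ ((2+ε)/ε) * (ν * ((t:ℝ) * W)) := by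
      calc l ^ (p-1) * (1-l) ^ (1-p) * CC ≤ 1 * (1-l) ^ (1-p) * CC := by
            apply mul_le_mul_of_nonneg_right _ hCC0
            exact mul_le_mul_of_nonneg_right hL4 hL20
        _ = (1-l) ^ (1-p) * CC := by ring
        _ ≤ ((2+ε)/ε) * (ν * ((t:ℝ) * W)) := mul_le_mul hL2 hCCub hCC0 (by positivity)
    have h8 : ((2+ε)/ε) * (ν * ((t:ℝ) * W)) ≤ (ε/3) * ((t:ℝ) * W) := by
      rw [← mul_assoc]
      exact mul_le_mul_of_nonneg_right hkey2 htW0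
    have h9 : ((1-ε) + ε/3) * ((t:ℝ) * W) ≤ l * ((t:ℝ) * (1-μ) * W) := by
      have hh := mul_le_mul_of_nonneg_right hsc htW0
      have heq : l * ((t:ℝ) * (1-μ) * W) = (l * (1-μ)) * ((t:ℝ) * W) := by ring
      rw [heq]
      exact hh
    have h10 : (t:ℝ) * (1-ε) ^ p * W ≤ (1-ε) * ((t:ℝ) * W) := by
      have hh := mul_le_mul_of_nonneg_right h1εp' htW0
      have heq : (t:ℝ) * (1-ε) ^ p * W = (1-ε) ^ p * ((t:ℝ) * W) := by ring
      rw [heq]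
      exact hh
    linarith [hSL, h6, h7, h8, h9, h10]
  -- conversion to lpNorm
  have hSUM0 : 0 ≤ SUM := Finset.sum_nonneg fun r _ => Real.rpow_nonneg (abs_nonneg _) _
  have hlpy : lpNorm p (B.mulVec x) = SUM ^ (1/p) := by
    rw [hSUMdef, lpNorm]
  have hlpx : lpNorm p x = W ^ (1/p) := by
    rw [hWdef, lpNorm, hwdef]
  have hconv : ∀ s : ℝ, 0 ≤ s → ((t:ℝ) * s ^ p * W) ^ (1/p) = (t:ℝ) ^ (1/p) * s * W ^ (1/p) := by
    intro s hs
    rw [Real.mul_rpow (mul_nonneg (by positivity) (Real.rpow_nonneg hs p)) hW0,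
        Real.mul_rpow (by positivity) (Real.rpow_nonneg hs p),
        ← Real.rpow_mul hs, mul_one_div_cancel hpne, Real.rpow_one]
  constructor
  · have h1 : 0 ≤ (t:ℝ) * (1-ε) ^ p * W :=
      mul_nonneg (mul_nonneg (by positivity) (Real.rpow_nonneg (by linarith) p)) hW0
    calc (t:ℝ) ^ (1/p) * (1-ε) * lpNorm p x
        = ((t:ℝ) * (1-ε) ^ p * W) ^ (1/p) := by
          rw [hlpx, hconv (1-ε) (by linarith)]
      _ ≤ SUM ^ (1/p) := Real.rpow_le_rpow h1 hlower hinvp.le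
      _ = lpNorm p (B.mulVec x) := hlpy.symm
  · calc lpNorm p (B.mulVec x) = SUM ^ (1/p) := hlpy
      _ ≤ ((t:ℝ) * (1+ε) ^ p * W) ^ (1/p) := Real.rpow_le_rpow hSUM0 hupper hinvp.le
      _ = (t:ℝ) ^ (1/p) * (1+ε) * lpNorm p x := by
          rw [hlpx, hconv (1+ε) (by linarith)]
end

section
/- Let 1 ≤ p, let k ≤ n be positive integers, let ε ∈ [0,1], and suppose the subspace X ⊆ ℝ^n is (2k, ε)-ℓ_p-spread. Then for every 1 ≤ q < p, X is (k, ε_q)-ℓ_q-spread, where ε_q = ε² (k/n)^{1/q}. -/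
open Finset

/-- Top-`k` selection: any finite set `U` with at least `k` elements has a `k`-element
subset `T` on which `f` dominates `f` on `U \ T`. -/
lemma exists_topk {ι : Type*} [DecidableEq ι] (f : ι → ℝ) :
    ∀ (k : ℕ) (U : Finset ι), k ≤ U.card →
      ∃ T ⊆ U, T.card = k ∧ ∀ i ∈ U \ T, ∀ j ∈ T, f i ≤ f j := by
  intro k
  induction k with
  | zero => intro U _; exact ⟨∅, Finset.empty_subset _, rfl, by simp⟩
  | succ k ih =>
    intro U hU
    obtain ⟨T, hTU, hTcard, hmax⟩ := ih U (Nat.le_of_succ_le hU)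
    have hne : (U \ T).Nonempty := by
      rw [← Finset.card_pos, Finset.card_sdiff_of_subset hTU]
      omega
    obtain ⟨j0, hj0, hj0max⟩ := Finset.exists_max_image (U \ T) f hne
    have hj0T : j0 ∉ T := (Finset.mem_sdiff.mp hj0).2
    refine ⟨insert j0 T, Finset.insert_subset (Finset.mem_sdiff.mp hj0).1 hTU, ?_, ?_⟩
    · rw [Finset.card_insert_of_notMem hj0T, hTcard]
    · intro i hi j hj
      have hiU : i ∈ U := (Finset.mem_sdiff.mp hi).1
      have hiT : i ∉ insert j0 T := (Finset.mem_sdiff.mp hi).2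
      have hiT' : i ∈ U \ T :=
        Finset.mem_sdiff.mpr ⟨hiU, fun h => hiT (Finset.mem_insert_of_mem h)⟩
      rcases Finset.mem_insert.mp hj with rfl | hjT
      · exact hj0max i hiT'
      · exact hmax i hiT' j hjT

set_option maxHeartbeats 2000000 in
/-- **ℓ_p-spread implies ℓ_q-spread.** If `X ⊆ ℝ^n` is `(2k, ε)`-`ℓ_p`-spread with
`1 ≤ q < p`, then `X` is `(k, ε² (k/n)^(1/q))`-`ℓ_q`-spread. -/
theorem spread_p_to_q {n : ℕ} (p : ℝ) (hp : 1 ≤ p) (k : ℕ) (hk : 0 < k) (hkn : k ≤ n)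
    (ε : ℝ) (hε : ε ∈ Set.Icc (0 : ℝ) 1) (X : Submodule ℝ (Fin n → ℝ))
    (hX : SpreadSubspace p (2 * (k : ℝ)) ε X)
    (q : ℝ) (hq : 1 ≤ q) (hqp : q < p) :
    SpreadSubspace q k (ε ^ 2 * ((k : ℝ) / n) ^ (1 / q)) X := by
  classical
  intro x hxX hx0 hcomp
  obtain ⟨y, hySp, hyR⟩ := hcomp
  have hq0 : (0:ℝ) < q := lt_of_lt_of_le one_pos hq
  have hp0 : (0:ℝ) < p := lt_of_lt_of_le one_pos hp
  have hpq : (0:ℝ) < p - q := by linarith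
  have hn0 : 0 < n := lt_of_lt_of_le hk hkn
  have hnR : (0:ℝ) < n := by exact_mod_cast hn0
  have hkR : (0:ℝ) < k := by exact_mod_cast hk
  have hε0 := hε.1
  have hε1 := hε.2
  -- basics about lpNorm
  have sum_nonneg' : ∀ (r : ℝ) (w : Fin n → ℝ), 0 ≤ ∑ i, |w i| ^ r := fun r w =>
    Finset.sum_nonneg fun i _ => Real.rpow_nonneg (abs_nonneg _) r
  have lp_nonneg : ∀ (r : ℝ) (w : Fin n → ℝ), 0 ≤ lpNorm r w := fun r w =>
    Real.rpow_nonneg (sum_nonneg' r w) _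
  have lp_pow : ∀ (r : ℝ), 0 < r → ∀ (w : Fin n → ℝ), lpNorm r w ^ r = ∑ i, |w i| ^ r := by
    intro r hr w
    rw [lpNorm, ← Real.rpow_mul (sum_nonneg' r w), one_div_mul_cancel hr.ne', Real.rpow_one]
  -- the support of y as a Finset
  set T : Finset (Fin n) := Finset.univ.filter (fun i => y i ≠ 0) with hTdef
  have hTset : Function.support y = ↑T := by
    ext i; simp [hTdef, Function.mem_support]
  have hyT : ∀ i, i ∉ T → y i = 0 := by
    intro i hi
    by_contra h
    exact hi (Finset.mem_filter.mpr ⟨Finset.mem_univ _, h⟩)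
  have hTk : T.card ≤ k := by
    have := hySp
    rw [Sparse, hTset, Set.ncard_coe_finset] at this
    exact_mod_cast this
  have hspread := hX x hxX hx0
  rw [Compressible] at hspread
  push_neg at hspread
  by_cases hbig : k ≤ Tᶜ.card
  · -- main case
    obtain ⟨T', hT'sub, hT'card, hT'max⟩ := exists_topk (fun i => |x i|) k Tᶜ hbig
    have hT'ne : T'.Nonempty := by rw [← Finset.card_pos, hT'card]; exact hk
    obtain ⟨j0, hj0T', hj0min⟩ := Finset.exists_min_image T' (fun i => |x i|) hT'ne
    set δ := |x j0| with hδdef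
    have hδ0 : 0 ≤ δ := abs_nonneg _
    set S := T ∪ T' with hSdef
    set z : Fin n → ℝ := fun i => if i ∈ S then x i else 0 with hzdef
    have hxz : ∀ i, (x - z) i = if i ∈ S then 0 else x i := by
      intro i
      by_cases h : i ∈ S <;> simp [hzdef, h]
    -- z is 2k-sparse
    have hzSp : Sparse (2 * (k:ℝ)) z := by
      rw [Sparse]
      have hsub : Function.support z ⊆ ↑S := by
        intro i hi
        rw [Function.mem_support] at hi
        by_contra h
        rw [Finset.mem_coe] at h
        exact hi (by simp [hzdef, h])
      have h1 : (Function.support z).ncard ≤ S.card := by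
        have := Set.ncard_le_ncard hsub (Set.toFinite _)
        rwa [Set.ncard_coe_finset] at this
      have h2 : S.card ≤ 2 * k := by
        have h := Finset.card_union_le T T'
        rw [hSdef]
        omega
      calc ((Function.support z).ncard : ℝ) ≤ (S.card : ℝ) := by exact_mod_cast h1
        _ ≤ 2 * (k:ℝ) := by exact_mod_cast h2
    have hzlt : ε * lpNorm p x < lpNorm p (x - z) := hspread z hzSp
    -- sums
    set Pp := ∑ i, |x i| ^ p with hPpdef
    set Qq := ∑ i, |x i| ^ q with hQqdef
    set Rq := ∑ i, |(x - y) i| ^ q with hRqdef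
    have hPp0 : 0 ≤ Pp := sum_nonneg' p x
    have hQq0 : 0 ≤ Qq := sum_nonneg' q x
    have hSp_sum : ∑ i, |(x - z) i| ^ p = ∑ i ∈ Sᶜ, |x i| ^ p := by
      rw [← Finset.sum_add_sum_compl S (fun i => |(x - z) i| ^ p)]
      have h1 : ∑ i ∈ S, |(x - z) i| ^ p = 0 :=
        Finset.sum_eq_zero fun i hi => by
          rw [hxz i, if_pos hi, abs_zero, Real.zero_rpow hp0.ne']
      have h2 : ∑ i ∈ Sᶜ, |(x - z) i| ^ p = ∑ i ∈ Sᶜ, |x i| ^ p :=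
        Finset.sum_congr rfl fun i hi => by
          rw [hxz i, if_neg (Finset.mem_compl.mp hi)]
      rw [h1, h2, zero_add]
    have hA : ε ^ p * Pp < ∑ i ∈ Sᶜ, |x i| ^ p := by
      have h := Real.rpow_lt_rpow (mul_nonneg hε0 (lp_nonneg p x)) hzlt hp0
      rwa [Real.mul_rpow hε0 (lp_nonneg p x), lp_pow p hp0, lp_pow p hp0, hSp_sum] at h
    -- coordinates outside S are at most δ
    have hout : ∀ i ∈ Sᶜ, |x i| ≤ δ := by
      intro i hi
      rw [Finset.mem_compl, hSdef, Finset.mem_union] at hi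
      push_neg at hi
      exact hT'max i (Finset.mem_sdiff.mpr ⟨Finset.mem_compl.mpr hi.1, hi.2⟩) j0 hj0T'
    rcases eq_or_lt_of_le hδ0 with hδz | hδpos
    · -- δ = 0 : all coordinates outside S vanish, contradicting the strict bound
      have hzero : ∑ i ∈ Sᶜ, |x i| ^ p = 0 :=
        Finset.sum_eq_zero fun i hi => by
          have : |x i| = 0 := le_antisymm (hδz ▸ hout i hi) (abs_nonneg _)
          rw [this, Real.zero_rpow hp0.ne']
      rw [hzero] at hA
      exact absurd hA (not_lt.mpr (mul_nonneg (Real.rpow_nonneg hε0 p) hPp0))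
    -- δ > 0 case
    have hTcomp : ∀ i, i ∉ T → |(x - y) i| = |x i| := by
      intro i hi
      rw [Pi.sub_apply, hyT i hi, sub_zero]
    have hRq_nonneg : ∀ i ∈ (Finset.univ : Finset (Fin n)), 0 ≤ |(x - y) i| ^ q :=
      fun i _ => Real.rpow_nonneg (abs_nonneg _) q
    have hB : (k:ℝ) * δ ^ q ≤ Rq := by
      have h1 : (k:ℝ) * δ ^ q ≤ ∑ i ∈ T', |x i| ^ q := by
        calc (k:ℝ) * δ ^ q = ∑ _i ∈ T', δ ^ q := by
              rw [Finset.sum_const, hT'card, nsmul_eq_mul]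
          _ ≤ ∑ i ∈ T', |x i| ^ q :=
              Finset.sum_le_sum fun i hi =>
                Real.rpow_le_rpow hδ0 (hj0min i hi) hq0.le
      have h2 : ∑ i ∈ T', |x i| ^ q = ∑ i ∈ T', |(x - y) i| ^ q :=
        Finset.sum_congr rfl fun i hi => by
          rw [hTcomp i (Finset.mem_compl.mp (hT'sub hi))]
      have h3 : ∑ i ∈ T', |(x - y) i| ^ q ≤ Rq :=
        Finset.sum_le_sum_of_subset_of_nonneg (Finset.subset_univ _)
          (fun i _ _ => Real.rpow_nonneg (abs_nonneg _) q)
      linarith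
    have hA2 : ∑ i ∈ Sᶜ, |x i| ^ p ≤ δ ^ (p - q) * Rq := by
      have step1 : ∑ i ∈ Sᶜ, |x i| ^ p ≤ ∑ i ∈ Sᶜ, δ ^ (p - q) * |x i| ^ q := by
        refine Finset.sum_le_sum fun i hi => ?_
        have hsplit : |x i| ^ p = |x i| ^ (p - q) * |x i| ^ q := by
          have h := Real.rpow_add' (abs_nonneg (x i))
            (show (p - q) + q ≠ 0 by rw [sub_add_cancel]; exact hp0.ne')
          rwa [sub_add_cancel] at h
        rw [hsplit]
        exact mul_le_mul_of_nonneg_right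
          (Real.rpow_le_rpow (abs_nonneg _) (hout i hi) hpq.le)
          (Real.rpow_nonneg (abs_nonneg _) q)
      have step2 : ∑ i ∈ Sᶜ, δ ^ (p - q) * |x i| ^ q
          = δ ^ (p - q) * ∑ i ∈ Sᶜ, |x i| ^ q := by rw [Finset.mul_sum]
      have step3 : ∑ i ∈ Sᶜ, |x i| ^ q ≤ Rq := by
        have h2 : ∑ i ∈ Sᶜ, |x i| ^ q = ∑ i ∈ Sᶜ, |(x - y) i| ^ q :=
          Finset.sum_congr rfl fun i hi => by
            have : i ∉ T := fun h => (Finset.mem_compl.mp hi) (Finset.mem_union_left _ h)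
            rw [hTcomp i this]
        rw [h2]
        exact Finset.sum_le_sum_of_subset_of_nonneg (Finset.subset_univ _)
          (fun i _ _ => Real.rpow_nonneg (abs_nonneg _) q)
      calc ∑ i ∈ Sᶜ, |x i| ^ p ≤ δ ^ (p - q) * ∑ i ∈ Sᶜ, |x i| ^ q := by
            rw [← step2]; exact step1
        _ ≤ δ ^ (p - q) * Rq :=
            mul_le_mul_of_nonneg_left step3 (Real.rpow_nonneg hδ0 _)
    have hA' : ε ^ p * Pp < δ ^ (p - q) * Rq := lt_of_lt_of_le hA hA2
    have hRq0 : 0 < Rq :=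
      lt_of_lt_of_le (mul_pos hkR (Real.rpow_pos_of_pos hδpos q)) hB
    -- exponents
    set g := q / p with hgdef
    set f := (p - q) / p with hfdef
    have hg0 : 0 < g := div_pos hq0 hp0
    have hf0 : 0 < f := div_pos hpq hp0
    have hf1 : f ≤ 1 := by rw [hfdef, div_le_one hp0]; linarith
    have hgf : g + f = 1 := by rw [hgdef, hfdef]; field_simp; ring
    -- raise hA' to power g
    have h1 : ε ^ q * Pp ^ g < δ ^ ((p - q) * g) * Rq ^ g := by
      have h := Real.rpow_lt_rpow (mul_nonneg (Real.rpow_nonneg hε0 p) hPp0) hA' hg0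
      rwa [Real.mul_rpow (Real.rpow_nonneg hε0 p) hPp0,
        Real.mul_rpow (Real.rpow_nonneg hδ0 _) hRq0.le,
        ← Real.rpow_mul hε0, ← Real.rpow_mul hδ0,
        show p * g = q by rw [hgdef]; field_simp] at h
    -- raise hB to power f
    have h2 : (k:ℝ) ^ f * δ ^ (q * f) ≤ Rq ^ f := by
      have h := Real.rpow_le_rpow (mul_nonneg hkR.le (Real.rpow_nonneg hδ0 q)) hB hf0.le
      rwa [Real.mul_rpow hkR.le (Real.rpow_nonneg hδ0 q), ← Real.rpow_mul hδ0] at h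
    have hqf : q * f = (p - q) * g := by rw [hgdef, hfdef]; ring
    -- multiply
    have hRqf : 0 < Rq ^ f := Real.rpow_pos_of_pos hRq0 f
    have hmul : (ε ^ q * Pp ^ g) * ((k:ℝ) ^ f * δ ^ (q * f))
        < (δ ^ ((p - q) * g) * Rq ^ g) * Rq ^ f := by
      calc (ε ^ q * Pp ^ g) * ((k:ℝ) ^ f * δ ^ (q * f))
          ≤ (ε ^ q * Pp ^ g) * Rq ^ f :=
            mul_le_mul_of_nonneg_left h2
              (mul_nonneg (Real.rpow_nonneg hε0 q) (Real.rpow_nonneg hPp0 g))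
        _ < (δ ^ ((p - q) * g) * Rq ^ g) * Rq ^ f :=
            mul_lt_mul_of_pos_right h1 hRqf
    have hRqgf : Rq ^ g * Rq ^ f = Rq := by
      rw [← Real.rpow_add hRq0, hgf, Real.rpow_one]
    have hfinal : ε ^ q * Pp ^ g * (k:ℝ) ^ f < Rq := by
      have hδe : 0 < δ ^ ((p - q) * g) := Real.rpow_pos_of_pos hδpos _
      have h : (ε ^ q * Pp ^ g * (k:ℝ) ^ f) * δ ^ ((p - q) * g) < Rq * δ ^ ((p - q) * g) := by
        calc (ε ^ q * Pp ^ g * (k:ℝ) ^ f) * δ ^ ((p - q) * g)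
            = (ε ^ q * Pp ^ g) * ((k:ℝ) ^ f * δ ^ (q * f)) := by rw [hqf]; ring
          _ < (δ ^ ((p - q) * g) * Rq ^ g) * Rq ^ f := hmul
          _ = Rq * δ ^ ((p - q) * g) := by rw [mul_assoc, hRqgf]; ring
      exact lt_of_mul_lt_mul_right h hδe.le
    -- Jensen / power mean inequality : Pp ≥ n^(1-p/q) Qq^(p/q), in the form below
    have hjen : ((1 / (n:ℝ)) * Qq) ^ (p / q) ≤ (1 / (n:ℝ)) * Pp := by
      have hpq1 : (1:ℝ) ≤ p / q := (one_le_div hq0).mpr hqp.le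
      have h := Real.rpow_arith_mean_le_arith_mean_rpow Finset.univ
        (fun _ : Fin n => 1 / (n:ℝ)) (fun i => |x i| ^ q)
        (fun i _ => by positivity) (by
          rw [Finset.sum_const, Finset.card_univ, Fintype.card_fin, nsmul_eq_mul]
          field_simp) (fun i _ => Real.rpow_nonneg (abs_nonneg _) q) hpq1
      have heq : ∀ i : Fin n, (|x i| ^ q) ^ (p / q) = |x i| ^ p := by
        intro i
        rw [← Real.rpow_mul (abs_nonneg _)]
        congr 1
        field_simp
      calc ((1 / (n:ℝ)) * Qq) ^ (p / q)
          = (∑ i, (1 / (n:ℝ)) * |x i| ^ q) ^ (p / q) := by rw [← Finset.mul_sum]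
        _ ≤ ∑ i, (1 / (n:ℝ)) * (|x i| ^ q) ^ (p / q) := h
        _ = (1 / (n:ℝ)) * Pp := by
            rw [← Finset.mul_sum]
            congr 1
            exact Finset.sum_congr rfl fun i _ => heq i
    -- convert Jensen to : n^g * ((1/n) * Qq) ≤ Pp^g
    have hP : (n:ℝ) ^ g * ((1 / (n:ℝ)) * Qq) ≤ Pp ^ g := by
      have h0 : 0 ≤ (1 / (n:ℝ)) * Qq := by positivity
      have h := Real.rpow_le_rpow (Real.rpow_nonneg h0 _) hjen hg0.le
      rw [← Real.rpow_mul h0, show p / q * g = 1 by rw [hgdef]; field_simp,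
        Real.rpow_one, Real.mul_rpow (by positivity) hPp0] at h
      have hmul2 := mul_le_mul_of_nonneg_left h (le_of_lt (Real.rpow_pos_of_pos hnR g))
      calc (n:ℝ) ^ g * ((1 / (n:ℝ)) * Qq)
          ≤ (n:ℝ) ^ g * ((1 / (n:ℝ)) ^ g * Pp ^ g) := hmul2
        _ = ((n:ℝ) * (1 / (n:ℝ))) ^ g * Pp ^ g := by
            rw [Real.mul_rpow hnR.le (by positivity)]; ring
        _ = Pp ^ g := by
            rw [mul_one_div_cancel hnR.ne', Real.one_rpow, one_mul]
    -- identity : k^f * (n^g * (1/n)) = (k/n)^f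
    have hkn_id : ((k:ℝ) / n) ^ f = (k:ℝ) ^ f * ((n:ℝ) ^ g * (1 / (n:ℝ))) := by
      have h1 : (n:ℝ) ^ g * (1 / (n:ℝ)) = ((n:ℝ) ^ f)⁻¹ := by
        calc (n:ℝ) ^ g * (1 / (n:ℝ)) = (n:ℝ) ^ g / (n:ℝ) ^ (1:ℝ) := by
              rw [Real.rpow_one, mul_one_div]
          _ = (n:ℝ) ^ (g - 1) := (Real.rpow_sub hnR g 1).symm
          _ = (n:ℝ) ^ (-f) := by rw [show g - 1 = -f by linarith]
          _ = ((n:ℝ) ^ f)⁻¹ := Real.rpow_neg hnR.le f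
      rw [h1, Real.div_rpow hkR.le hnR.le, div_eq_mul_inv]
    -- the ℓ_q residual is small (hypothesis), in sum form
    have hRqle : Rq ≤ (ε ^ 2) ^ q * ((k:ℝ) / n) * Qq := by
      have h := Real.rpow_le_rpow (lp_nonneg q (x - y)) hyR hq0.le
      rw [Real.mul_rpow (by positivity) (lp_nonneg q x),
        Real.mul_rpow (by positivity) (by positivity),
        ← Real.rpow_mul (by positivity : (0:ℝ) ≤ (k:ℝ)/n), one_div_mul_cancel hq0.ne',
        Real.rpow_one, lp_pow q hq0, lp_pow q hq0, ← hRqdef, ← hQqdef] at h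
      linarith
    have hε2q : (ε ^ 2) ^ q ≤ ε ^ q := by
      have h1 : ε ^ q ≤ 1 := Real.rpow_le_one hε0 hε1 hq0.le
      have h2 : (ε ^ 2) ^ q = ε ^ q * ε ^ q := by rw [pow_two, Real.mul_rpow hε0 hε0]
      nlinarith [Real.rpow_nonneg hε0 q]
    have hknf : (k:ℝ) / n ≤ ((k:ℝ) / n) ^ f := by
      have hkn1 : (k:ℝ) / n ≤ 1 := by
        rw [div_le_one hnR]; exact_mod_cast hkn
      have h := Real.rpow_le_rpow_of_exponent_ge (div_pos hkR hnR) hkn1 hf1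
      rwa [Real.rpow_one] at h
    have hchain : Rq < Rq :=
      calc Rq ≤ (ε ^ 2) ^ q * ((k:ℝ) / n) * Qq := hRqle
        _ ≤ ε ^ q * ((k:ℝ) / n) ^ f * Qq := by
            refine mul_le_mul_of_nonneg_right ?_ hQq0
            exact mul_le_mul hε2q hknf (le_of_lt (div_pos hkR hnR))
              (Real.rpow_nonneg hε0 q)
        _ = ε ^ q * ((n:ℝ) ^ g * ((1 / (n:ℝ)) * Qq)) * (k:ℝ) ^ f := by
            rw [hkn_id]; ring
        _ ≤ ε ^ q * Pp ^ g * (k:ℝ) ^ f :=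
            mul_le_mul_of_nonneg_right
              (mul_le_mul_of_nonneg_left hP (Real.rpow_nonneg hε0 q))
              (Real.rpow_nonneg hkR.le f)
        _ < Rq := hfinal
    exact lt_irrefl _ hchain
  · -- degenerate case : n < 2k, so x itself is 2k-sparse
    have hTc : Tᶜ.card = n - T.card := by
      rw [Finset.card_compl, Fintype.card_fin]
    have hn2k : n < 2 * k := by omega
    have hxSp : Sparse (2 * (k:ℝ)) x := by
      rw [Sparse]
      have h1 : (Function.support x).ncard ≤ n := by
        have := Set.ncard_le_ncard (Set.subset_univ (Function.support x)) Set.finite_univ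
        rwa [Set.ncard_univ, Nat.card_eq_fintype_card, Fintype.card_fin] at this
      have : (Function.support x).ncard ≤ 2 * k := by omega
      calc ((Function.support x).ncard : ℝ) ≤ ((2 * k : ℕ) : ℝ) := by exact_mod_cast this
        _ = 2 * (k:ℝ) := by push_cast; ring
    have h0 : lpNorm p (x - x) ≤ ε * lpNorm p x := by
      rw [sub_self]
      have : lpNorm p (0 : Fin n → ℝ) = 0 := by
        rw [lpNorm]
        have : ∀ i : Fin n, |(0 : Fin n → ℝ) i| ^ p = 0 := fun i => by
          rw [Pi.zero_apply, abs_zero, Real.zero_rpow hp0.ne']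
        rw [Finset.sum_congr rfl fun i _ => this i, Finset.sum_const, smul_zero,
          Real.zero_rpow (by positivity : (1:ℝ)/p ≠ 0)]
      rw [this]
      exact mul_nonneg hε0 (lp_nonneg p x)
    exact hspread x hxSp |>.not_ge h0
end

section
/- Let 1 ≤ q < p, let k ≤ n be positive integers, let ε > 0, and let x ∈ ℝ^n be a nonzero vector that is (k, ε)-ℓ_p-compressible. Then Δ_{q,p}(x) ≥ 1/((k/n)^{1/q − 1/p} + ε). -/
open Finset

lemma holder_rpow {ι : Type*} (q p : ℝ) (hq0 : 0 < q) (hqp : q < p)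
    (S : Finset ι) (f : ι → ℝ) :
    (∑ i ∈ S, |f i| ^ q) ^ (1/q) ≤
      (S.card : ℝ) ^ (1/q - 1/p) * (∑ i ∈ S, |f i| ^ p) ^ (1/p) := by
  have hp0 : 0 < p := hq0.trans hqp
  set r : ℝ := p / q with hr
  have hr1 : 1 ≤ r := (one_le_div hq0).mpr hqp.le
  have key := Real.inner_le_weight_mul_Lp_of_nonneg S hr1 (fun _ => 1)
    (fun i => |f i| ^ q) (fun _ => zero_le_one)
    (fun i => Real.rpow_nonneg (abs_nonneg _) _)
  simp only [one_mul, sum_const, nsmul_eq_mul, mul_one] at key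
  have hpow : ∀ i ∈ S, (|f i| ^ q) ^ r = |f i| ^ p := by
    intro i _
    rw [← Real.rpow_mul (abs_nonneg _)]
    congr 1
    field_simp [hr]
    rw [hr, mul_comm, div_mul_cancel₀ _ hq0.ne']
  rw [sum_congr rfl hpow] at key
  have h1 : ((∑ i ∈ S, |f i| ^ q) : ℝ) ^ (1/q) ≤
      ((S.card : ℝ) ^ (1 - r⁻¹) * (∑ i ∈ S, |f i| ^ p) ^ r⁻¹) ^ (1/q) := by
    apply Real.rpow_le_rpow (sum_nonneg fun i _ => Real.rpow_nonneg (abs_nonneg _) _) key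
      (by positivity)
  refine h1.trans_eq ?_
  rw [Real.mul_rpow (Real.rpow_nonneg (by positivity) _) (Real.rpow_nonneg
      (sum_nonneg fun i _ => Real.rpow_nonneg (abs_nonneg _) _) _),
    ← Real.rpow_mul (by positivity), ← Real.rpow_mul
      (sum_nonneg fun i _ => Real.rpow_nonneg (abs_nonneg _) _)]
  congr 2
  · field_simp [hr]
    rw [hr, div_sub_one hq0.ne']; ring
  · field_simp [hr]
    rw [hr, div_mul_cancel₀ _ hq0.ne']

/-- **Compressibility lower-bounds distortion.** If a nonzero `x ∈ ℝ^n` is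
`(k, ε)`-`ℓ_p`-compressible with `1 ≤ q < p`, then
`Δ_{q,p}(x) ≥ 1/((k/n)^(1/q - 1/p) + ε)`. -/
theorem compressible_distortion_lower {n : ℕ} (q p : ℝ) (hq : 1 ≤ q) (hqp : q < p)
    (k : ℕ) (hk : 0 < k) (hkn : k ≤ n) (ε : ℝ) (hε : 0 < ε)
    (x : Fin n → ℝ) (hx : x ≠ 0) (hcomp : Compressible p k ε x) :
    1 / (((k : ℝ) / n) ^ (1 / q - 1 / p) + ε) ≤ distortion q p x := by
  have hq0 : 0 < q := lt_of_lt_of_le one_pos hq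
  have hp0 : 0 < p := hq0.trans hqp
  have hn : 0 < n := lt_of_lt_of_le hk hkn
  have hα : (0:ℝ) < 1/q - 1/p := by
    rw [sub_pos]
    exact one_div_lt_one_div_of_lt hq0 hqp
  set α : ℝ := 1/q - 1/p with hαdef
  obtain ⟨y, hys, hyc⟩ := hcomp
  set y' : Fin n → ℝ := fun i => if y i = 0 then 0 else x i with hy'
  set S : Finset (Fin n) := Finset.univ.filter (fun i => y i ≠ 0) with hS
  -- S.card ≤ k
  have hScard : (S.card : ℝ) ≤ k := by
    have hsup : Function.support y = ↑S := by
      ext i; simp [hS, Function.mem_support]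
    have := hys
    rwa [Sparse, hsup, Set.ncard_coe_finset] at this
  -- norms are positive
  have hsum_nonneg : ∀ (r : ℝ) (f : Fin n → ℝ), 0 ≤ ∑ i, |f i| ^ r :=
    fun r f => sum_nonneg fun i _ => Real.rpow_nonneg (abs_nonneg _) _
  have hnormpos : ∀ (r : ℝ), 0 < r → 0 < lpNorm r x := by
    intro r hr
    obtain ⟨i, hi⟩ := Function.ne_iff.mp hx
    apply Real.rpow_pos_of_pos
    apply sum_pos' (fun j _ => Real.rpow_nonneg (abs_nonneg _) _)
    exact ⟨i, mem_univ i, Real.rpow_pos_of_pos (abs_pos.mpr hi) r⟩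
  have hxp : 0 < lpNorm p x := hnormpos p hp0
  have hxq : 0 < lpNorm q x := hnormpos q hq0
  -- lpNorm p (x - y') ≤ ε * lpNorm p x
  have hmono : ∀ (r : ℝ), 0 < r → ∀ f g : Fin n → ℝ, (∀ i, |f i| ≤ |g i|) →
      lpNorm r f ≤ lpNorm r g := by
    intro r hr f g hfg
    apply Real.rpow_le_rpow (hsum_nonneg r f) _ (by positivity)
    exact sum_le_sum fun i _ => Real.rpow_le_rpow (abs_nonneg _) (hfg i) hr.le
  have hxy' : lpNorm p (x - y') ≤ ε * lpNorm p x := by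
    refine le_trans (hmono p hp0 _ (x - y) ?_) hyc
    intro i
    by_cases h : y i = 0 <;> simp [hy', Pi.sub_apply, h]
  -- lpNorm p y' ≤ lpNorm p x
  have hy'x : lpNorm p y' ≤ lpNorm p x := by
    apply hmono p hp0
    intro i
    by_cases h : y i = 0 <;> simp [hy', h]
  -- Hölder for y' on S
  have hy'q : lpNorm q y' ≤ (k:ℝ) ^ α * lpNorm p x := by
    have hvanish : ∀ (r : ℝ), 0 < r → ∑ i, |y' i| ^ r = ∑ i ∈ S, |y' i| ^ r := by
      intro r hr
      rw [← Finset.sum_filter_add_sum_filter_not Finset.univ (fun i => y i ≠ 0)]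
      have : ∑ i ∈ Finset.univ.filter (fun i => ¬ y i ≠ 0), |y' i| ^ r = 0 := by
        apply Finset.sum_eq_zero
        intro i hi
        simp only [mem_filter, not_not] at hi
        simp [hy', hi.2, Real.zero_rpow hr.ne']
      rw [this, add_zero]
    have h1 : lpNorm q y' ≤ (S.card : ℝ) ^ α * (∑ i ∈ S, |y' i| ^ p) ^ (1/p) := by
      rw [lpNorm, hvanish q hq0]
      exact holder_rpow q p hq0 hqp S y'
    have h2 : (∑ i ∈ S, |y' i| ^ p) ^ (1/p) = lpNorm p y' := by
      rw [lpNorm, hvanish p hp0]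
    rw [h2] at h1
    have hy'nn : 0 ≤ lpNorm p y' := Real.rpow_nonneg (hsum_nonneg p y') _
    refine h1.trans (mul_le_mul ?_ hy'x hy'nn (by positivity))
    exact Real.rpow_le_rpow (Nat.cast_nonneg _) hScard hα.le
  -- Hölder for x - y' on univ
  have hxyq : lpNorm q (x - y') ≤ (n:ℝ) ^ α * lpNorm p (x - y') := by
    have := holder_rpow q p hq0 hqp Finset.univ (x - y')
    simpa only [lpNorm, Finset.card_univ, Fintype.card_fin] using this
  -- Minkowski
  have hmink : lpNorm q x ≤ lpNorm q y' + lpNorm q (x - y') := by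
    have := Real.Lp_add_le Finset.univ y' (x - y') hq
    have hxe : ∀ i, y' i + (x - y') i = x i := fun i => by simp
    simp only [hxe] at this
    exact this
  -- combine
  have hkey : lpNorm q x ≤ ((k:ℝ) ^ α + ε * (n:ℝ) ^ α) * lpNorm p x := by
    have h3 : lpNorm q (x - y') ≤ (n:ℝ) ^ α * (ε * lpNorm p x) :=
      hxyq.trans (mul_le_mul_of_nonneg_left hxy' (by positivity))
    calc lpNorm q x ≤ lpNorm q y' + lpNorm q (x - y') := hmink
      _ ≤ (k:ℝ) ^ α * lpNorm p x + (n:ℝ) ^ α * (ε * lpNorm p x) := add_le_add hy'q h3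
      _ = ((k:ℝ) ^ α + ε * (n:ℝ) ^ α) * lpNorm p x := by ring
  -- final algebra
  rw [distortion]
  have hcard : (Fintype.card (Fin n) : ℝ) = (n:ℝ) := by simp
  rw [hcard]
  have hnα : (0:ℝ) < (n:ℝ) ^ α := Real.rpow_pos_of_pos (by exact_mod_cast hn) _
  have hdiv : ((k:ℝ)/n) ^ α = (k:ℝ) ^ α / (n:ℝ) ^ α :=
    Real.div_rpow (Nat.cast_nonneg _) (Nat.cast_nonneg _) α
  have hD : (0:ℝ) < ((k:ℝ)/n) ^ α + ε := by positivity
  rw [div_le_div_iff₀ hD hxq, one_mul, hdiv]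
  calc lpNorm q x ≤ ((k:ℝ) ^ α + ε * (n:ℝ) ^ α) * lpNorm p x := hkey
    _ = (n:ℝ) ^ α * lpNorm p x * ((k:ℝ) ^ α / (n:ℝ) ^ α + ε) := by
        field_simp
end

section
/- Let 1 ≤ q < p, let k ≤ n be positive integers, let ε > 0, and suppose the subspace X ⊆ ℝ^n is (k, ε)-ℓ_p-spread. Then Δ_{q,p}(X) ≤ (1/ε)·(n/k)^{1/q}. -/
open Finset

/-- **Spread subspaces have small distortion.** If `X ⊆ ℝ^n` is `(k, ε)`-`ℓ_p`-spread and
`1 ≤ q < p`, then `Δ_{q,p}(X) ≤ (1/ε)(n/k)^(1/q)`. -/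
theorem spread_distortion_upper {n : ℕ} (q p : ℝ) (hq : 1 ≤ q) (hqp : q < p)
    (k : ℕ) (hk : 0 < k) (hkn : k ≤ n) (ε : ℝ) (hε : 0 < ε)
    (X : Submodule ℝ (Fin n → ℝ)) (hX : SpreadSubspace p k ε X) :
    distortionSub q p X ≤ (1 / ε) * ((n : ℝ) / k) ^ (1 / q) := by
  have hq0 : (0:ℝ) < q := lt_of_lt_of_le one_pos hq
  have hp0 : (0:ℝ) < p := hq0.trans hqp
  have hqne : q ≠ 0 := hq0.ne'
  have hpne : p ≠ 0 := hp0.ne'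
  have hk0 : (0:ℝ) < (k:ℝ) := by exact_mod_cast hk
  have hn0 : (0:ℝ) < (n:ℝ) := lt_of_lt_of_le hk0 (by exact_mod_cast hkn)
  have hnk1 : (1:ℝ) ≤ (n:ℝ)/(k:ℝ) := (one_le_div hk0).2 (by exact_mod_cast hkn)
  have hB : (0:ℝ) ≤ (1 / ε) * ((n : ℝ) / k) ^ (1 / q) := by positivity
  refine Real.sSup_le ?_ hB
  rintro d ⟨x, hxX, hx0, rfl⟩
  set Sq : ℝ := ∑ i, |x i| ^ q with hSqdef
  have hterm : ∀ i : Fin n, 0 ≤ |x i| ^ q := fun i => Real.rpow_nonneg (abs_nonneg _) q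
  have hSqpos : 0 < Sq := by
    obtain ⟨j, hj⟩ := Function.ne_iff.1 hx0
    have h1 : 0 < |x j| ^ q := Real.rpow_pos_of_pos (abs_pos.2 hj) q
    exact h1.trans_le (Finset.single_le_sum (fun i _ => hterm i) (Finset.mem_univ j))
  set c : ℝ := Sq / k with hcdef
  have hc : 0 < c := div_pos hSqpos hk0
  set T : Finset (Fin n) := Finset.univ.filter (fun i => c < |x i| ^ q) with hTdef
  have hTk : (T.card : ℝ) ≤ (k:ℝ) := by
    have h1 : (T.card : ℝ) * c ≤ ∑ i ∈ T, |x i| ^ q := by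
      have h := Finset.card_nsmul_le_sum T (fun i => |x i| ^ q) c
        (fun i hi => by
          simp only [hTdef, Finset.mem_filter, Finset.mem_univ, true_and] at hi
          exact hi.le)
      simpa [nsmul_eq_mul] using h
    have h2 : ∑ i ∈ T, |x i| ^ q ≤ Sq :=
      Finset.sum_le_sum_of_subset_of_nonneg (Finset.subset_univ T) (fun i _ _ => hterm i)
    have hkc : (k:ℝ) * c = Sq := by
      rw [hcdef]; field_simp
    have h3 : (T.card : ℝ) * c ≤ (k:ℝ) * c := by linarith
    exact le_of_mul_le_mul_right h3 hc
  set y : Fin n → ℝ := fun i => if i ∈ T then x i else 0 with hydef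
  have hSp : Sparse (k:ℝ) y := by
    have hsub : Function.support y ⊆ ↑T := by
      intro i hi
      simp only [Function.mem_support, hydef] at hi
      by_cases h : i ∈ T
      · exact Finset.mem_coe.2 h
      · simp [h] at hi
    have h1 : (Function.support y).ncard ≤ T.card := by
      have := Set.ncard_le_ncard hsub T.finite_toSet
      rwa [Set.ncard_coe_finset] at this
    unfold Sparse
    exact le_trans (by exact_mod_cast h1) hTk
  have hkey : ε * lpNorm p x < lpNorm p (x - y) := by
    by_contra h
    exact hX x hxX hx0 ⟨y, hSp, not_lt.1 h⟩
  have htermp : ∀ i : Fin n, 0 ≤ |x i| ^ p := fun i => Real.rpow_nonneg (abs_nonneg _) p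
  have hsub : ∀ i, |(x - y) i| ^ p = if i ∈ T then 0 else |x i| ^ p := by
    intro i
    by_cases hi : i ∈ T
    · simp [hydef, hi, Real.zero_rpow hpne]
    · simp [hydef, hi]
  have hsum : (∑ i, |(x - y) i| ^ p) ≤ c ^ ((p - q)/q) * Sq := by
    calc ∑ i, |(x - y) i| ^ p
        = ∑ i ∈ Finset.univ.filter (fun i => ¬ i ∈ T), |x i| ^ p := by
          rw [Finset.sum_congr rfl fun i _ => hsub i, Finset.sum_ite,
            Finset.sum_const_zero, zero_add]
      _ ≤ ∑ i ∈ Finset.univ.filter (fun i => ¬ i ∈ T), c ^ ((p - q)/q) * |x i| ^ q := by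
          apply Finset.sum_le_sum
          intro i hi
          have hle : |x i| ^ q ≤ c := by
            simp only [hTdef, Finset.mem_filter, Finset.mem_univ, true_and, not_lt] at hi
            exact hi
          rcases eq_or_lt_of_le (abs_nonneg (x i)) with h0 | h0
          · rw [← h0, Real.zero_rpow hpne, Real.zero_rpow hqne, mul_zero]
          · have e1 : |x i| ^ p = |x i| ^ (p - q) * |x i| ^ q := by
              rw [← Real.rpow_add h0]; ring_nf
            rw [e1]
            apply mul_le_mul_of_nonneg_right _ (hterm i)
            have e2 : |x i| ^ (p - q) = (|x i| ^ q) ^ ((p - q)/q) := by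
              rw [← Real.rpow_mul (abs_nonneg _)]
              congr 1
              field_simp
            rw [e2]
            exact Real.rpow_le_rpow (hterm i) hle (div_nonneg (by linarith) hq0.le)
      _ = c ^ ((p - q)/q) * ∑ i ∈ Finset.univ.filter (fun i => ¬ i ∈ T), |x i| ^ q := by
          rw [Finset.mul_sum]
      _ ≤ c ^ ((p - q)/q) * Sq := by
          apply mul_le_mul_of_nonneg_left _ (Real.rpow_nonneg hc.le _)
          exact Finset.sum_le_sum_of_subset_of_nonneg (Finset.subset_univ _)
            (fun i _ _ => hterm i)
  have hlp : lpNorm p (x - y) ≤ Sq ^ (1/q) / (k:ℝ) ^ (1/q - 1/p) := by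
    have h1 : lpNorm p (x - y) ≤ (c ^ ((p - q)/q) * Sq) ^ (1/p) := by
      unfold lpNorm
      exact Real.rpow_le_rpow (Finset.sum_nonneg fun i _ => Real.rpow_nonneg (abs_nonneg _) p)
        hsum (by positivity)
    refine h1.trans_eq ?_
    have e1 : c ^ ((p - q)/q) * Sq = Sq ^ ((p - q)/q + 1) / (k:ℝ) ^ ((p - q)/q) := by
      rw [hcdef, Real.div_rpow hSqpos.le hk0.le, Real.rpow_add hSqpos, Real.rpow_one]
      ring
    rw [e1, Real.div_rpow (Real.rpow_nonneg hSqpos.le _) (Real.rpow_nonneg hk0.le _), ← Real.rpow_mul hSqpos.le,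
      ← Real.rpow_mul hk0.le]
    have eA : ((p - q)/q + 1) * (1/p) = 1/q := by field_simp; ring
    have eB : ((p - q)/q) * (1/p) = 1/q - 1/p := by field_simp
    rw [eA, eB]
  have hQ : lpNorm q x = Sq ^ (1/q) := by rw [lpNorm, hSqdef]
  have hQpos : 0 < lpNorm q x := by
    rw [hQ]; exact Real.rpow_pos_of_pos hSqpos _
  have hPle : lpNorm p x ≤ (lpNorm q x / (k:ℝ) ^ (1/q - 1/p)) / ε := by
    rw [le_div_iff₀ hε, mul_comm]
    rw [hQ]
    exact le_trans hkey.le hlp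
  have heq : (n:ℝ)^(1/q - 1/p) * ((lpNorm q x / (k:ℝ) ^ (1/q - 1/p)) / ε) / lpNorm q x
      = (1/ε) * ((n:ℝ)/(k:ℝ))^(1/q - 1/p) := by
    rw [Real.div_rpow hn0.le hk0.le]
    have hkp : (0:ℝ) < (k:ℝ) ^ (1/q - 1/p) := Real.rpow_pos_of_pos hk0 _
    field_simp
  have hd : distortion q p x ≤ (1/ε) * ((n:ℝ)/(k:ℝ))^(1/q - 1/p) := by
    rw [← heq]
    unfold distortion
    rw [Fintype.card_fin]
    gcongr
  refine hd.trans ?_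
  have hmono : ((n:ℝ)/(k:ℝ))^(1/q - 1/p) ≤ ((n:ℝ)/(k:ℝ))^(1/q) := by
    apply Real.rpow_le_rpow_of_exponent_le hnk1
    have : 0 ≤ 1/p := by positivity
    linarith
  exact mul_le_mul_of_nonneg_left hmono (by positivity)
end

section
/- Let A ∈ M_{m,n,s,t} with s, t ≥ 2, and let ℓ ≥ 1. Suppose there exists a vertex v* ∈ V_L such that the ball B_{G_A}(v*, 2ℓ+1) contains no cycle. Then there exists a nonzero vector x ∈ ℝ^n with |supp(x)| ≤ 1 + 2 t (t−1)^{ℓ−1} (s−1)^{ℓ} such that for every p ≥ 1, ‖Ax‖_p^p ≤ t (t−1)^{ℓ} (s−1)^{(1−p)ℓ} · ‖x‖_p^p. -/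
open Finset

open Finset SimpleGraph

section WalkAux
variable {V : Type*} {G : SimpleGraph V}

/-- Product of edge weights along a walk. -/
def wprod (σ : V → V → ℝ) : ∀ {a b : V}, G.Walk a b → ℝ
  | _, _, SimpleGraph.Walk.nil => 1
  | a, _, @SimpleGraph.Walk.cons _ _ _ c _ _ p => σ a c * wprod σ p

@[simp] lemma wprod_nil (σ : V → V → ℝ) (a : V) :
    wprod σ (SimpleGraph.Walk.nil : G.Walk a a) = 1 := rfl

@[simp] lemma wprod_cons (σ : V → V → ℝ) {a c b : V} (h : G.Adj a c) (p : G.Walk c b) :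
    wprod σ (SimpleGraph.Walk.cons h p) = σ a c * wprod σ p := rfl

lemma wprod_concat (σ : V → V → ℝ) {a b c : V} (p : G.Walk a b) (h : G.Adj b c) :
    wprod σ (p.concat h) = wprod σ p * σ b c := by
  induction p with
  | nil => simp [SimpleGraph.Walk.concat_nil]
  | cons h' p ih => rw [SimpleGraph.Walk.concat_cons]; simp [ih]; ring

lemma abs_wprod (σ : V → V → ℝ) (hσ : ∀ a b, G.Adj a b → |σ a b| = 1)
    {a b : V} (p : G.Walk a b) : |wprod σ p| = 1 := by
  induction p with
  | nil => simp
  | cons h' p ih => rw [wprod_cons, abs_mul, ih, hσ _ _ h', one_mul]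

/-- Lift a walk whose support lies in `s` to the induced graph. -/
def liftWalk {s : Set V} : ∀ {a b : V} (p : G.Walk a b) (ha : a ∈ s) (hb : b ∈ s)
    (_ : ∀ v ∈ p.support, v ∈ s), (G.induce s).Walk ⟨a, ha⟩ ⟨b, hb⟩
  | _, _, SimpleGraph.Walk.nil, _, _, _ => SimpleGraph.Walk.nil
  | _, _, SimpleGraph.Walk.cons (v := c) h p, ha, hb, hs =>
      SimpleGraph.Walk.cons (by exact h)
        (liftWalk p (hs c (by simp)) hb (fun v hv => hs v (by simp [hv])))

lemma liftWalk_map {s : Set V} {a b : V} (p : G.Walk a b) (ha : a ∈ s) (hb : b ∈ s)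
    (hs : ∀ v ∈ p.support, v ∈ s) :
    (liftWalk p ha hb hs).map (SimpleGraph.Embedding.induce s).toHom = p := by
  induction p with
  | nil => rfl
  | cons h' p ih => exact congrArg (SimpleGraph.Walk.cons h') (ih _ _ _)

/-- In a graph whose induced subgraph on `s` is acyclic, two paths between the same
endpoints with support inside `s` are equal. -/
lemma path_unique_of_acyclic {s : Set V} (hac : (SimpleGraph.induce s G).IsAcyclic)
    {a b : V} (p q : G.Walk a b) (hp : p.IsPath) (hq : q.IsPath)
    (hps : ∀ v ∈ p.support, v ∈ s) (hqs : ∀ v ∈ q.support, v ∈ s) : p = q := by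
  have ha : a ∈ s := hps a p.start_mem_support
  have hb : b ∈ s := hps b p.end_mem_support
  set f := (SimpleGraph.Embedding.induce (G := G) s).toHom with hf
  have hp' : (liftWalk p ha hb hps).IsPath := by
    apply SimpleGraph.Walk.IsPath.of_map (f := f)
    rw [liftWalk_map]; exact hp
  have hq' : (liftWalk q ha hb hqs).IsPath := by
    apply SimpleGraph.Walk.IsPath.of_map (f := f)
    rw [liftWalk_map]; exact hq
  have := SimpleGraph.isAcyclic_iff_path_unique.mp hac ⟨liftWalk p ha hb hps, hp'⟩
      ⟨liftWalk q ha hb hqs, hq'⟩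
  have heq : liftWalk p ha hb hps = liftWalk q ha hb hqs := congrArg Subtype.val this
  have h1 := liftWalk_map p ha hb hps
  have h2 := liftWalk_map q ha hb hqs
  rw [heq] at h1
  exact h1.symm.trans h2

end WalkAux

open Finset SimpleGraph

section GraphAux
variable {V : Type*} {G : SimpleGraph V}

lemma adj_dist_le {a w y : V} (h : G.Adj w y) (hr : G.Reachable a w) :
    G.dist a y ≤ G.dist a w + 1 := by
  obtain ⟨p, hp⟩ := hr.exists_walk_length_eq_dist
  have := G.dist_le (p.concat h)
  rwa [SimpleGraph.Walk.length_concat, hp] at this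

lemma exists_parent {a w : V} (hr : G.Reachable a w) {k : ℕ} (hd : G.dist a w = k + 1) :
    ∃ y, G.Adj y w ∧ G.Reachable a y ∧ G.dist a y = k := by
  obtain ⟨p, hp⟩ := hr.exists_walk_length_eq_dist
  rw [hd] at hp
  cases hrev : p.reverse with
  | nil =>
      have := congrArg SimpleGraph.Walk.length hrev
      rw [SimpleGraph.Walk.length_reverse, hp] at this
      simp at this
  | @cons _ y _ h q =>
      refine ⟨y, h.symm, q.reverse.reachable, ?_⟩
      have hql : q.length = k := by
        have := congrArg SimpleGraph.Walk.length hrev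
        rw [SimpleGraph.Walk.length_reverse, hp] at this
        simpa using this.symm
      have h1 : G.dist a y ≤ k := by
        have := G.dist_le q.reverse
        rwa [SimpleGraph.Walk.length_reverse, hql] at this
      have h2 : k ≤ G.dist a y := by
        have hry : G.Reachable a y := q.reverse.reachable
        have := adj_dist_le h.symm hry
        omega
      omega

lemma mem_support_dist_le {a w y : V} (p : G.Walk a w) (hy : y ∈ p.support) :
    G.dist a y ≤ p.length := by
  classical
  have := G.dist_le (p.takeUntil y hy)
  have := SimpleGraph.Walk.length_takeUntil_le p hy
  omega

end GraphAux

section BipAux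
open SimpleGraph
variable {m n : ℕ}

/-- Edge sign function for the bipartite graph of a matrix. -/
def esgn (A : Matrix (Fin m) (Fin n) ℝ) : (Fin n ⊕ Fin m) → (Fin n ⊕ Fin m) → ℝ
  | Sum.inl u, Sum.inr r => A r u
  | Sum.inr r, Sum.inl u => A r u
  | _, _ => 1

@[simp] lemma esgn_lr (A : Matrix (Fin m) (Fin n) ℝ) (u : Fin n) (r : Fin m) :
    esgn A (Sum.inl u) (Sum.inr r) = A r u := rfl

@[simp] lemma esgn_rl (A : Matrix (Fin m) (Fin n) ℝ) (u : Fin n) (r : Fin m) :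
    esgn A (Sum.inr r) (Sum.inl u) = A r u := rfl

lemma bip_adj_lr {N : Fin n → Finset (Fin m)} {u : Fin n} {r : Fin m} :
    (bipGraph N).Adj (Sum.inl u) (Sum.inr r) ↔ r ∈ N u := Iff.rfl

lemma bip_adj_ll {N : Fin n → Finset (Fin m)} {u u' : Fin n} :
    ¬ (bipGraph N).Adj (Sum.inl u) (Sum.inl u') := fun h => h

lemma bip_adj_rr {N : Fin n → Finset (Fin m)} {r r' : Fin m} :
    ¬ (bipGraph N).Adj (Sum.inr r) (Sum.inr r') := fun h => h

lemma matNbrs_mem {A : Matrix (Fin m) (Fin n) ℝ} {u : Fin n} {r : Fin m} :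
    r ∈ matNbrs A u ↔ A r u ≠ 0 := by simp [matNbrs]

/-- side of a vertex : 0 for left, 1 for right -/
def vside : (Fin n ⊕ Fin m) → ℕ := Sum.elim (fun _ => 0) (fun _ => 1)

lemma bip_adj_side {N : Fin n → Finset (Fin m)} {x y : Fin n ⊕ Fin m}
    (h : (bipGraph N).Adj x y) : vside x + vside y = 1 := by
  cases x <;> cases y <;> first | rfl | exact absurd h (by exact fun h => h)

lemma bip_walk_parity {N : Fin n → Finset (Fin m)} {x y : Fin n ⊕ Fin m}
    (p : (bipGraph N).Walk x y) : (p.length + vside x + vside y) % 2 = 0 := by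
  induction p with
  | nil => simp only [SimpleGraph.Walk.length_nil]; omega
  | @cons a b c h p ih =>
      have := bip_adj_side h
      have hlen : (SimpleGraph.Walk.cons h p).length = p.length + 1 := rfl
      omega

lemma bip_dist_parity {N : Fin n → Finset (Fin m)} {x y : Fin n ⊕ Fin m}
    (hr : (bipGraph N).Reachable x y) :
    ((bipGraph N).dist x y + vside x + vside y) % 2 = 0 := by
  obtain ⟨p, hp⟩ := hr.exists_walk_length_eq_dist
  rw [← hp]; exact bip_walk_parity p

end BipAux

section PickAux
open SimpleGraph
variable {V : Type*} {G : SimpleGraph V}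

/-- A choice of shortest walk. -/
noncomputable def spick (a w : V) (h : G.Reachable a w) : G.Walk a w :=
  h.exists_walk_length_eq_dist.choose

lemma spick_length (a w : V) (h : G.Reachable a w) :
    (spick a w h).length = G.dist a w :=
  h.exists_walk_length_eq_dist.choose_spec

end PickAux

/-- The tree vector rooted at `v` of depth `2ℓ`. -/
noncomputable def treeVec {m n : ℕ} (A : Matrix (Fin m) (Fin n) ℝ) (v : Fin n) (ℓ s : ℕ) :
    Fin n → ℝ := open Classical in fun u =>
  if h : (bipGraph (matNbrs A)).Reachable (Sum.inl v) (Sum.inl u) ∧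
      (bipGraph (matNbrs A)).dist (Sum.inl v) (Sum.inl u) ≤ 2*ℓ then
    (-(((s:ℝ)-1)⁻¹))^((bipGraph (matNbrs A)).dist (Sum.inl v) (Sum.inl u) / 2) *
      wprod (esgn A) (spick (Sum.inl v) (Sum.inl u) h.1)
  else 0

lemma lpNorm_rpow {ι : Type*} [Fintype ι] {p : ℝ} (hp : p ≠ 0) (y : ι → ℝ) :
    lpNorm p y ^ p = ∑ i, |y i| ^ p := by
  have h0 : (0:ℝ) ≤ ∑ i, |y i| ^ p :=
    Finset.sum_nonneg fun i _ => Real.rpow_nonneg (abs_nonneg _) _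
  rw [lpNorm, ← Real.rpow_mul h0, one_div, inv_mul_cancel₀ hp, Real.rpow_one]

lemma nat_geom_bound {q : ℕ} (hq : 2 ≤ q) (a : ℕ) :
    ∀ ℓ : ℕ, 1 ≤ ℓ → ∑ j ∈ Finset.range ℓ, a * q^j ≤ 2 * a * q^(ℓ-1) := by
  intro ℓ
  induction ℓ with
  | zero => omega
  | succ N ih =>
      intro _
      rcases Nat.eq_zero_or_pos N with h | hN
      · subst h; simp; omega
      · have h1 := ih hN
        have hpow : q^N = q^(N-1) * q := by rw [← pow_succ]; congr 1; omega
        have key : 2 * a * q^(N-1) ≤ a * q^N := by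
          calc 2*a*q^(N-1) = a * (q^(N-1) * 2) := by ring
            _ ≤ a * (q^(N-1) * q) := Nat.mul_le_mul_left a (Nat.mul_le_mul_left _ hq)
            _ = a * q^N := by rw [← hpow]
        have hNN : N + 1 - 1 = N := by omega
        rw [Finset.sum_range_succ, hNN]
        calc ∑ j ∈ Finset.range N, a * q ^ j + a * q ^ N
            ≤ 2*a*q^(N-1) + a*q^N := Nat.add_le_add_right h1 _
          _ ≤ a*q^N + a*q^N := Nat.add_le_add_right key _
          _ = 2*a*q^N := by ring

section Monster
open SimpleGraph

lemma treeVec_pos {m n : ℕ} {A : Matrix (Fin m) (Fin n) ℝ} {v u : Fin n} {ℓ s : ℕ}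
    (h : (bipGraph (matNbrs A)).Reachable (Sum.inl v) (Sum.inl u) ∧
      (bipGraph (matNbrs A)).dist (Sum.inl v) (Sum.inl u) ≤ 2*ℓ) :
    treeVec A v ℓ s u =
      (-(((s:ℝ)-1)⁻¹))^((bipGraph (matNbrs A)).dist (Sum.inl v) (Sum.inl u) / 2) *
        wprod (esgn A) (spick (Sum.inl v) (Sum.inl u) h.1) := by
  rw [treeVec, dif_pos h]

lemma treeVec_neg {m n : ℕ} {A : Matrix (Fin m) (Fin n) ℝ} {v u : Fin n} {ℓ s : ℕ}
    (h : ¬((bipGraph (matNbrs A)).Reachable (Sum.inl v) (Sum.inl u) ∧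
      (bipGraph (matNbrs A)).dist (Sum.inl v) (Sum.inl u) ≤ 2*ℓ)) :
    treeVec A v ℓ s u = 0 := by
  rw [treeVec, dif_neg h]

lemma treeVec_mulVec {m n : ℕ} {s t : ℕ} (hs : 2 ≤ s)
    {A : Matrix (Fin m) (Fin n) ℝ} (hA : Biregular s t A) {v : Fin n} {ℓ : ℕ}
    (hac : BallAcyclic (bipGraph (matNbrs A)) (Sum.inl v) (2*ℓ+1)) (r : Fin m) :
    A.mulVec (treeVec A v ℓ s) r = 0 ∨
      ((bipGraph (matNbrs A)).Reachable (Sum.inl v) (Sum.inr r) ∧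
       (bipGraph (matNbrs A)).dist (Sum.inl v) (Sum.inr r) = 2*ℓ+1 ∧
       |A.mulVec (treeVec A v ℓ s) r| = (((s:ℝ)-1)⁻¹)^ℓ) := by
  classical
  obtain ⟨hA01, hrow, hcol⟩ := hA
  set G := bipGraph (matNbrs A) with hG
  set x := treeVec A v ℓ s with hxdef
  set β : ℝ := ((s:ℝ)-1)⁻¹ with hβ
  have hs1 : (1:ℝ) ≤ (s:ℝ) - 1 := by
    have h2 : (2:ℝ) ≤ (s:ℝ) := by exact_mod_cast hs
    linarith
  have hs0 : ((s:ℝ)-1) ≠ 0 := by linarith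
  have hβpos : 0 < β := by rw [hβ]; positivity
  have hmul : A.mulVec x r = ∑ u, A r u * x u := rfl
  have hAabs : ∀ (r' : Fin m) (u : Fin n), A r' u ≠ 0 → |A r' u| = 1 := by
    intro r' u h
    rcases hA01 r' u with h0 | h1 | h1
    · exact absurd h0 h
    · rw [h1]; norm_num
    · rw [h1]; norm_num
  have hAsq : ∀ (u : Fin n), A r u ≠ 0 → A r u * A r u = 1 := by
    intro u h
    rcases hA01 r u with h0 | h1 | h1
    · exact absurd h0 h
    · rw [h1]; norm_num
    · rw [h1]; norm_num
  have hadjF : ∀ u : Fin n, A r u ≠ 0 → G.Adj (Sum.inl u) (Sum.inr r) := by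
    intro u h
    show r ∈ matNbrs A u
    exact matNbrs_mem.mpr h
  by_cases hr : G.Reachable (Sum.inl v) (Sum.inr r)
  case neg =>
    left
    rw [hmul]
    apply Finset.sum_eq_zero
    intro u _
    by_cases hAu : A r u = 0
    · rw [hAu, zero_mul]
    · have hadj := hadjF u hAu
      have hxu : x u = 0 := by
        apply treeVec_neg
        rintro ⟨h1, -⟩
        exact hr (h1.trans hadj.reachable)
      rw [hxu, mul_zero]
  case pos =>
  set k := G.dist (Sum.inl v) (Sum.inr r) with hk
  have hparity : k % 2 = 1 := by
    have hpp' := bip_dist_parity (N := matNbrs A) hr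
    have hpp : (G.dist (Sum.inl v) (Sum.inr r) + 0 + 1) % 2 = 0 := by
      simpa [vside] using hpp'
    omega
  have hparL : ∀ (u : Fin n), G.Reachable (Sum.inl v) (Sum.inl u) →
      G.dist (Sum.inl v) (Sum.inl u) % 2 = 0 := by
    intro u hru
    have hpp' := bip_dist_parity (N := matNbrs A) hru
    have hpp : (G.dist (Sum.inl v) (Sum.inl u) + 0 + 0) % 2 = 0 := by
      simpa [vside] using hpp'
    omega
  by_cases hkle : k ≤ 2*ℓ+1
  swap
  · -- too far away: all neighbors outside support
    left
    rw [hmul]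
    apply Finset.sum_eq_zero
    intro u _
    by_cases hAu : A r u = 0
    · rw [hAu, zero_mul]
    · have hadj := hadjF u hAu
      have hxu : x u = 0 := by
        apply treeVec_neg
        rintro ⟨h1, h2⟩
        have h2' : G.dist (Sum.inl v) (Sum.inl u) ≤ 2*ℓ := h2
        have := adj_dist_le hadj h1
        omega
      rw [hxu, mul_zero]
  -- within the ball
  have hacyc : (SimpleGraph.induce (graphBall G (Sum.inl v) (2*ℓ+1)) G).IsAcyclic := hac
  have hsupp : ∀ (w : Fin n ⊕ Fin m) (p : G.Walk (Sum.inl v) w), p.length ≤ 2*ℓ+1 →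
      ∀ y ∈ p.support, y ∈ graphBall G (Sum.inl v) (2*ℓ+1) := by
    intro w p hlen y hy
    exact ⟨⟨p.takeUntil y hy⟩, le_trans (mem_support_dist_le p hy) hlen⟩
  have huniq : ∀ (w : Fin n ⊕ Fin m) (p q : G.Walk (Sum.inl v) w),
      G.dist (Sum.inl v) w ≤ 2*ℓ+1 →
      p.length = G.dist (Sum.inl v) w → q.length = G.dist (Sum.inl v) w → p = q := by
    intro w p q hle hp hq
    exact path_unique_of_acyclic hacyc p q (p.isPath_of_length_eq_dist hp)
      (q.isPath_of_length_eq_dist hq)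
      (hsupp w p (by omega)) (hsupp w q (by omega))
  have hW : ∀ (w1 w2 : Fin n ⊕ Fin m) (hadj : G.Adj w1 w2) (h1 : G.Reachable (Sum.inl v) w1)
      (h2 : G.Reachable (Sum.inl v) w2),
      G.dist (Sum.inl v) w2 = G.dist (Sum.inl v) w1 + 1 → G.dist (Sum.inl v) w2 ≤ 2*ℓ+1 →
      wprod (esgn A) (spick (Sum.inl v) w2 h2) =
        wprod (esgn A) (spick (Sum.inl v) w1 h1) * esgn A w1 w2 := by
    intro w1 w2 hadj h1 h2 hd hle
    have hcon : ((spick (Sum.inl v) w1 h1).concat hadj).length = G.dist (Sum.inl v) w2 := by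
      rw [SimpleGraph.Walk.length_concat, spick_length, hd]
    rw [← huniq w2 ((spick (Sum.inl v) w1 h1).concat hadj) (spick (Sum.inl v) w2 h2) hle
      hcon (spick_length _ _ _), wprod_concat]
  set F : Finset (Fin n) := Finset.univ.filter (fun u => A r u ≠ 0) with hF
  have hFcard : F.card = s := hrow r
  set W : ℝ := wprod (esgn A) (spick (Sum.inl v) (Sum.inr r) hr) with hWdef
  have hsgn1 : ∀ a b, G.Adj a b → |esgn A a b| = 1 := by
    rintro (u|r') (u'|r'') hadj
    · exact absurd hadj bip_adj_ll
    · exact hAabs _ _ (matNbrs_mem.mp hadj)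
    · exact hAabs _ _ (matNbrs_mem.mp hadj.symm)
    · exact absurd hadj bip_adj_rr
  have habsW : |W| = 1 := abs_wprod _ hsgn1 _
  have hreachF : ∀ u ∈ F, G.Reachable (Sum.inl v) (Sum.inl u) ∧
      G.Adj (Sum.inl u) (Sum.inr r) := by
    intro u hu
    have hAu : A r u ≠ 0 := by
      have := Finset.mem_filter.mp hu
      exact this.2
    have hadj := hadjF u hAu
    exact ⟨hr.trans hadj.reachable.symm, hadj⟩
  have hdich : ∀ u ∈ F, G.dist (Sum.inl v) (Sum.inl u) = k - 1 ∨
      G.dist (Sum.inl v) (Sum.inl u) = k + 1 := by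
    intro u hu
    obtain ⟨hru, hadj⟩ := hreachF u hu
    have h1 : G.dist (Sum.inl v) (Sum.inl u) ≤ k + 1 := adj_dist_le hadj.symm hr
    have h2 : k ≤ G.dist (Sum.inl v) (Sum.inl u) + 1 := adj_dist_le hadj hru
    have h3 := hparL u hru
    omega
  obtain ⟨y0, hy0adj, hy0reach, hy0d⟩ := exists_parent hr (by omega :
    G.dist (Sum.inl v) (Sum.inr r) = (k-1) + 1)
  obtain ⟨u₀⟩ | ⟨r'⟩ := y0
  swap
  · exact absurd hy0adj bip_adj_rr
  have hu₀F : u₀ ∈ F := by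
    have : A r u₀ ≠ 0 := matNbrs_mem.mp hy0adj
    simp [hF, this]
  have hpar_uniq : ∀ u ∈ F, G.dist (Sum.inl v) (Sum.inl u) = k - 1 → u = u₀ := by
    intro u hu hdu
    obtain ⟨hru, hadj⟩ := hreachF u hu
    have hq1 : ((spick (Sum.inl v) (Sum.inl u) hru).concat hadj).length = k := by
      rw [SimpleGraph.Walk.length_concat, spick_length, hdu]; omega
    have hq2 : ((spick (Sum.inl v) (Sum.inl u₀) hy0reach).concat hy0adj).length = k := by
      rw [SimpleGraph.Walk.length_concat, spick_length, hy0d]; omega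
    have heq := huniq (Sum.inr r) _ _ hkle hq1 hq2
    obtain ⟨hv', -⟩ := SimpleGraph.Walk.concat_inj heq
    exact Sum.inl.inj hv'
  -- value of parent terms
  have hterm_par : ∀ u ∈ F, G.dist (Sum.inl v) (Sum.inl u) = k - 1 →
      A r u * x u = (-β)^((k-1)/2) * W := by
    intro u hu hdu
    obtain ⟨hru, hadj⟩ := hreachF u hu
    have hcond : G.Reachable (Sum.inl v) (Sum.inl u) ∧
        G.dist (Sum.inl v) (Sum.inl u) ≤ 2*ℓ := ⟨hru, by omega⟩
    have hxu : x u = (-β)^(G.dist (Sum.inl v) (Sum.inl u) / 2) *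
        wprod (esgn A) (spick (Sum.inl v) (Sum.inl u) hru) := treeVec_pos hcond
    have hWW : W = wprod (esgn A) (spick (Sum.inl v) (Sum.inl u) hru) * A r u := by
      have h := hW (Sum.inl u) (Sum.inr r) hadj hru hr (by omega) hkle
      exact h
    rw [hxu, hdu, hWW]
    ring
  -- value of child terms (inside the ball)
  have hterm_child : k + 1 ≤ 2*ℓ → ∀ u ∈ F, G.dist (Sum.inl v) (Sum.inl u) = k + 1 →
      A r u * x u = (-β)^((k-1)/2 + 1) * W := by
    intro hkin u hu hdu
    obtain ⟨hru, hadj⟩ := hreachF u hu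
    have hAu : A r u ≠ 0 := (Finset.mem_filter.mp hu).2
    have hcond : G.Reachable (Sum.inl v) (Sum.inl u) ∧
        G.dist (Sum.inl v) (Sum.inl u) ≤ 2*ℓ := ⟨hru, by omega⟩
    have hxu : x u = (-β)^(G.dist (Sum.inl v) (Sum.inl u) / 2) *
        wprod (esgn A) (spick (Sum.inl v) (Sum.inl u) hru) := treeVec_pos hcond
    have hWW : wprod (esgn A) (spick (Sum.inl v) (Sum.inl u) hru) = W * A r u := by
      have h := hW (Sum.inr r) (Sum.inl u) hadj.symm hr hru (by omega) (by omega)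
      exact h
    have hdiv : (k+1)/2 = (k-1)/2 + 1 := by omega
    rw [hxu, hdu, hdiv, hWW]
    have := hAsq u hAu
    calc A r u * ((-β)^((k-1)/2+1) * (W * A r u))
        = (-β)^((k-1)/2+1) * W * (A r u * A r u) := by ring
      _ = (-β)^((k-1)/2+1) * W := by rw [this, mul_one]
  -- child terms outside the ball vanish
  have hterm_child0 : k = 2*ℓ + 1 → ∀ u ∈ F, G.dist (Sum.inl v) (Sum.inl u) = k + 1 →
      A r u * x u = 0 := by
    intro hkb u hu hdu
    have hxu : x u = 0 := treeVec_neg (by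
      rintro ⟨-, h2⟩
      have h2' : G.dist (Sum.inl v) (Sum.inl u) ≤ 2*ℓ := h2
      omega)
    rw [hxu, mul_zero]
  -- split the sum
  have hsum : A.mulVec x r = ∑ u ∈ F, A r u * x u := by
    rw [hmul]
    refine (Finset.sum_subset (Finset.subset_univ F) ?_).symm
    intro u _ hu
    have : A r u = 0 := by
      by_contra hne
      exact hu (by simp [hF, hne])
    rw [this, zero_mul]
  set Fch := F.filter (fun u => G.dist (Sum.inl v) (Sum.inl u) = k + 1) with hFchdef
  have hFsplit : F = insert u₀ Fch := by
    apply Finset.ext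
    intro u
    simp only [Finset.mem_insert, hFchdef, Finset.mem_filter]
    constructor
    · intro hu
      rcases hdich u hu with h | h
      · exact Or.inl (hpar_uniq u hu h)
      · exact Or.inr ⟨hu, h⟩
    · rintro (rfl | ⟨hu, -⟩)
      · exact hu₀F
      · exact hu
  have hnotmem : u₀ ∉ Fch := by
    simp only [hFchdef, Finset.mem_filter]
    rintro ⟨-, hd⟩
    omega
  have hcardch : Fch.card = s - 1 := by
    have := Finset.card_insert_of_notMem hnotmem
    rw [← hFsplit, hFcard] at this
    omega
  have hsum2 : A.mulVec x r = A r u₀ * x u₀ + ∑ u ∈ Fch, A r u * x u := by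
    rw [hsum, hFsplit, Finset.sum_insert hnotmem]
  by_cases hkin : k + 1 ≤ 2*ℓ
  · -- interior: the sum cancels
    left
    have hch : ∑ u ∈ Fch, A r u * x u =
        (s - 1 : ℕ) * ((-β)^((k-1)/2 + 1) * W) := by
      have hmem : ∀ u ∈ Fch, u ∈ F ∧ G.dist (Sum.inl v) (Sum.inl u) = k + 1 := by
        intro u hu
        rw [hFchdef] at hu
        exact Finset.mem_filter.mp hu
      rw [Finset.sum_congr rfl (fun u hu => hterm_child hkin u (hmem u hu).1
        (hmem u hu).2), Finset.sum_const, hcardch, nsmul_eq_mul]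
    rw [hsum2, hch, hterm_par u₀ hu₀F hy0d]
    have hcast : ((s - 1 : ℕ) : ℝ) = (s:ℝ) - 1 := by
      have : (1:ℕ) ≤ s := by omega
      push_cast [this]
      ring
    rw [hcast, pow_succ]
    have hβmul : ((s:ℝ) - 1) * (-β) = -1 := by
      rw [hβ]
      field_simp
    calc (-β)^((k-1)/2) * W + ((s:ℝ)-1) * ((-β)^((k-1)/2) * (-β) * W)
        = (-β)^((k-1)/2) * W * (1 + ((s:ℝ)-1) * (-β)) := by ring
      _ = 0 := by rw [hβmul]; ring
  · -- boundary: single term of absolute value β^ℓ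
    right
    have hkb : k = 2*ℓ + 1 := by omega
    refine ⟨hr, hkb, ?_⟩
    have hch : ∑ u ∈ Fch, A r u * x u = 0 := by
      refine Finset.sum_eq_zero (fun u hu => ?_)
      rw [hFchdef] at hu
      exact hterm_child0 hkb u (Finset.mem_filter.mp hu).1 (Finset.mem_filter.mp hu).2
    rw [hsum2, hch, add_zero, hterm_par u₀ hu₀F hy0d]
    have hdiv : (k-1)/2 = ℓ := by omega
    rw [hdiv, abs_mul, habsW, mul_one, abs_pow, abs_neg, abs_of_pos hβpos]
end Monster

section Counting
open SimpleGraph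

open Classical in
/-- Vertices at distance exactly `k` from the root. -/
noncomputable def layerF {m n : ℕ} (A : Matrix (Fin m) (Fin n) ℝ) (v : Fin n) (k : ℕ) :
    Finset (Fin n ⊕ Fin m) :=
  Finset.univ.filter (fun w => (bipGraph (matNbrs A)).Reachable (Sum.inl v) w ∧
    (bipGraph (matNbrs A)).dist (Sum.inl v) w = k)

lemma mem_layerF {m n : ℕ} {A : Matrix (Fin m) (Fin n) ℝ} {v : Fin n} {k : ℕ}
    {w : Fin n ⊕ Fin m} : w ∈ layerF A v k ↔
    (bipGraph (matNbrs A)).Reachable (Sum.inl v) w ∧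
      (bipGraph (matNbrs A)).dist (Sum.inl v) w = k := by
  simp [layerF]

open Classical in
lemma nbr_card_left {m n : ℕ} {s t : ℕ} {A : Matrix (Fin m) (Fin n) ℝ}
    (hA : Biregular s t A) (u : Fin n) :
    (Finset.univ.filter (fun y => (bipGraph (matNbrs A)).Adj (Sum.inl u) y)).card = t := by
  have h : Finset.univ.filter (fun y => (bipGraph (matNbrs A)).Adj (Sum.inl u) y) =
      (matNbrs A u).image Sum.inr := by
    apply Finset.ext
    rintro (u' | r)
    · simp only [Finset.mem_filter, Finset.mem_univ, true_and, Finset.mem_image]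
      constructor
      · intro h; exact absurd h bip_adj_ll
      · rintro ⟨r', -, h⟩; exact absurd h (by simp)
    · simp only [Finset.mem_filter, Finset.mem_univ, true_and, Finset.mem_image]
      constructor
      · intro h; exact ⟨r, h, rfl⟩
      · rintro ⟨r', hr', h⟩; cases Sum.inr.inj h; exact hr'
  rw [h, Finset.card_image_of_injective _ Sum.inr_injective]
  exact hA.2.2 u

open Classical in
lemma nbr_card_right {m n : ℕ} {s t : ℕ} {A : Matrix (Fin m) (Fin n) ℝ}
    (hA : Biregular s t A) (r : Fin m) :
    (Finset.univ.filter (fun y => (bipGraph (matNbrs A)).Adj (Sum.inr r) y)).card = s := by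
  have h : Finset.univ.filter (fun y => (bipGraph (matNbrs A)).Adj (Sum.inr r) y) =
      (Finset.univ.filter (fun u => A r u ≠ 0)).image Sum.inl := by
    apply Finset.ext
    rintro (u' | r')
    · simp only [Finset.mem_filter, Finset.mem_univ, true_and, Finset.mem_image]
      constructor
      · intro h
        exact ⟨u', matNbrs_mem.mp h, rfl⟩
      · rintro ⟨u'', hu, h⟩
        cases Sum.inl.inj h
        exact matNbrs_mem.mpr hu
    · simp only [Finset.mem_filter, Finset.mem_univ, true_and, Finset.mem_image]
      constructor
      · intro h; exact absurd h bip_adj_rr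
      · rintro ⟨u'', -, h⟩; exact absurd h (by simp)
  rw [h, Finset.card_image_of_injective _ Sum.inl_injective]
  exact hA.2.1 r

lemma layer_side {m n : ℕ} {A : Matrix (Fin m) (Fin n) ℝ} {v : Fin n} {k : ℕ}
    {w : Fin n ⊕ Fin m} (hw : w ∈ layerF A v k) :
    (k % 2 = 0 → ∃ u, w = Sum.inl u) ∧ (k % 2 = 1 → ∃ r, w = Sum.inr r) := by
  obtain ⟨hre, hd⟩ := mem_layerF.mp hw
  have hpp := bip_dist_parity hre
  cases w with
  | inl u =>
      simp only [vside, Sum.elim_inl, Sum.elim_inr] at hpp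
      exact ⟨fun _ => ⟨u, rfl⟩, fun h1 => by omega⟩
  | inr r =>
      simp only [vside, Sum.elim_inl, Sum.elim_inr] at hpp
      exact ⟨fun h0 => by omega, fun _ => ⟨r, rfl⟩⟩

open Classical in
lemma layerF_step {m n : ℕ} {s t : ℕ} {A : Matrix (Fin m) (Fin n) ℝ}
    (hA : Biregular s t A) (hs : 2 ≤ s) (ht : 2 ≤ t) (v : Fin n) (k : ℕ) (hk : 1 ≤ k) :
    (layerF A v (k+1)).card ≤
      (layerF A v k).card * (if k % 2 = 1 then s - 1 else t - 1) := by
  set G := bipGraph (matNbrs A) with hG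
  set D := (if k % 2 = 1 then s - 1 else t - 1) with hD
  have hsub : layerF A v (k+1) ⊆ (layerF A v k).biUnion
      (fun w => Finset.univ.filter (fun y => G.Adj w y ∧ y ∈ layerF A v (k+1))) := by
    intro w hw
    obtain ⟨hre, hd⟩ := mem_layerF.mp hw
    obtain ⟨y, hyadj, hyre, hyd⟩ := exists_parent hre hd
    refine Finset.mem_biUnion.mpr ⟨y, mem_layerF.mpr ⟨hyre, hyd⟩, ?_⟩
    simp only [Finset.mem_filter, Finset.mem_univ, true_and]
    exact ⟨hyadj, hw⟩
  have hbound : ∀ w ∈ layerF A v k,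
      (Finset.univ.filter (fun y => G.Adj w y ∧ y ∈ layerF A v (k+1))).card ≤ D := by
    intro w hw
    obtain ⟨hre, hd⟩ := mem_layerF.mp hw
    have hd' : G.dist (Sum.inl v) w = k := hd
    obtain ⟨pw, hpadj, hpre, hpd⟩ := exists_parent hre
      (by omega : G.dist (Sum.inl v) w = (k-1)+1)
    have hdeg : (Finset.univ.filter (fun y => G.Adj w y)).card = D + 1 := by
      rcases layer_side hw with ⟨h0, h1⟩
      rcases Nat.even_or_odd k with he | ho
      · obtain ⟨u, rfl⟩ := h0 (Nat.even_iff.mp he)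
        have hko : ¬ (k % 2 = 1) := by
          have := Nat.even_iff.mp he
          omega
        have hc1 : (Finset.univ.filter (fun y => G.Adj (Sum.inl u) y)).card = t :=
          nbr_card_left hA u
        have hc2 : D = t - 1 := by rw [hD, if_neg hko]
        omega
      · obtain ⟨r, rfl⟩ := h1 (Nat.odd_iff.mp ho)
        have hko : k % 2 = 1 := Nat.odd_iff.mp ho
        have hc1 : (Finset.univ.filter (fun y => G.Adj (Sum.inr r) y)).card = s :=
          nbr_card_right hA r
        have hc2 : D = s - 1 := by rw [hD, if_pos hko]
        omega
    have hsub2 : Finset.univ.filter (fun y => G.Adj w y ∧ y ∈ layerF A v (k+1)) ⊆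
        (Finset.univ.filter (fun y => G.Adj w y)).erase pw := by
      intro y hy
      obtain ⟨hadj, hmem⟩ := (Finset.mem_filter.mp hy).2
      refine Finset.mem_erase.mpr ⟨?_, Finset.mem_filter.mpr ⟨Finset.mem_univ _, hadj⟩⟩
      rintro rfl
      have hdd : G.dist (Sum.inl v) y = k + 1 := (mem_layerF.mp hmem).2
      have hpd' : G.dist (Sum.inl v) y = k - 1 := hpd
      omega
    calc (Finset.univ.filter (fun y => G.Adj w y ∧ y ∈ layerF A v (k+1))).card
        ≤ ((Finset.univ.filter (fun y => G.Adj w y)).erase pw).card :=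
          Finset.card_le_card hsub2
      _ = (Finset.univ.filter (fun y => G.Adj w y)).card - 1 := by
          rw [Finset.card_erase_of_mem]
          exact Finset.mem_filter.mpr ⟨Finset.mem_univ _, hpadj.symm⟩
      _ ≤ D := by omega
  calc (layerF A v (k+1)).card
      ≤ ((layerF A v k).biUnion _).card := Finset.card_le_card hsub
    _ ≤ ∑ w ∈ layerF A v k, (Finset.univ.filter
          (fun y => G.Adj w y ∧ y ∈ layerF A v (k+1))).card := Finset.card_biUnion_le
    _ ≤ ∑ w ∈ layerF A v k, D := Finset.sum_le_sum hbound
    _ = (layerF A v k).card * D := by rw [Finset.sum_const, smul_eq_mul]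

end Counting

section Chain
open SimpleGraph

lemma layerF_zero {m n : ℕ} {A : Matrix (Fin m) (Fin n) ℝ} {v : Fin n} :
    (layerF A v 0).card ≤ 1 := by
  classical
  have h : layerF A v 0 ⊆ {Sum.inl v} := by
    intro w hw
    obtain ⟨hre, hd⟩ := mem_layerF.mp hw
    have := (hre.dist_eq_zero_iff).mp hd
    simp [← this]
  calc (layerF A v 0).card ≤ ({Sum.inl v} : Finset (Fin n ⊕ Fin m)).card := Finset.card_le_card h
    _ = 1 := Finset.card_singleton _

open Classical in
lemma layerF_one {m n : ℕ} {s t : ℕ} {A : Matrix (Fin m) (Fin n) ℝ}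
    (hA : Biregular s t A) (v : Fin n) : (layerF A v 1).card ≤ t := by
  have h : layerF A v 1 ⊆ Finset.univ.filter
      (fun y => (bipGraph (matNbrs A)).Adj (Sum.inl v) y) := by
    intro w hw
    obtain ⟨hre, hd⟩ := mem_layerF.mp hw
    exact Finset.mem_filter.mpr ⟨Finset.mem_univ _, SimpleGraph.dist_eq_one_iff_adj.mp hd⟩
  calc (layerF A v 1).card ≤ _ := Finset.card_le_card h
    _ = t := nbr_card_left hA v

lemma layerF_bound {m n : ℕ} {s t : ℕ} {A : Matrix (Fin m) (Fin n) ℝ}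
    (hA : Biregular s t A) (hs : 2 ≤ s) (ht : 2 ≤ t) (v : Fin n) (j : ℕ) :
    (layerF A v (2*j+1)).card ≤ t * ((t-1)*(s-1))^j ∧
      (layerF A v (2*j+2)).card ≤ t * ((t-1)*(s-1))^j * (s-1) := by
  induction j with
  | zero =>
      constructor
      · simpa using layerF_one hA v
      · have h1 := layerF_step hA hs ht v 1 (by omega)
        rw [if_pos (by norm_num)] at h1
        have h2 := layerF_one hA v
        calc (layerF A v 2).card ≤ (layerF A v 1).card * (s-1) := h1
          _ ≤ t * (s-1) := Nat.mul_le_mul_right _ h2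
          _ = t * ((t-1)*(s-1))^0 * (s-1) := by ring
  | succ j ih =>
      obtain ⟨ih1, ih2⟩ := ih
      have hodd : (layerF A v (2*(j+1)+1)).card ≤ t * ((t-1)*(s-1))^(j+1) := by
        have h1 := layerF_step hA hs ht v (2*j+2) (by omega)
        rw [if_neg (by omega)] at h1
        have : 2*(j+1)+1 = (2*j+2)+1 := by ring
        rw [this]
        calc (layerF A v ((2*j+2)+1)).card ≤ (layerF A v (2*j+2)).card * (t-1) := h1
          _ ≤ t * ((t-1)*(s-1))^j * (s-1) * (t-1) := Nat.mul_le_mul_right _ ih2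
          _ = t * ((t-1)*(s-1))^(j+1) := by ring
      refine ⟨hodd, ?_⟩
      have h1 := layerF_step hA hs ht v (2*(j+1)+1) (by omega)
      rw [if_pos (by omega)] at h1
      have h2 : 2*(j+1)+2 = (2*(j+1)+1)+1 := by ring
      rw [h2]
      calc (layerF A v ((2*(j+1)+1)+1)).card ≤ (layerF A v (2*(j+1)+1)).card * (s-1) := h1
        _ ≤ t * ((t-1)*(s-1))^(j+1) * (s-1) := Nat.mul_le_mul_right _ hodd

lemma treeVec_root {m n : ℕ} {A : Matrix (Fin m) (Fin n) ℝ} {v : Fin n} {ℓ s : ℕ} :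
    treeVec A v ℓ s v = 1 := by
  have h : (bipGraph (matNbrs A)).Reachable (Sum.inl v) ((Sum.inl v : Fin n ⊕ Fin m)) ∧
      (bipGraph (matNbrs A)).dist (Sum.inl v) (Sum.inl v) ≤ 2*ℓ := by
    constructor
    · exact SimpleGraph.Reachable.refl _
    · rw [SimpleGraph.dist_self]; omega
  have hlen : (spick (Sum.inl v) ((Sum.inl v : Fin n ⊕ Fin m)) h.1).length = 0 := by
    rw [spick_length, SimpleGraph.dist_self]
  have hnil : spick (Sum.inl v) ((Sum.inl v : Fin n ⊕ Fin m)) h.1 = SimpleGraph.Walk.nil :=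
    SimpleGraph.Walk.Nil.eq_nil (SimpleGraph.Walk.nil_iff_length_eq.mpr hlen)
  rw [treeVec_pos h, hnil]
  simp [SimpleGraph.dist_self]

end Chain

/-- **Tree vectors.** If `A ∈ M_{m,n,s,t}` with `s, t ≥ 2`, `ℓ ≥ 1`, and some `v* ∈ V_L`
has a cycle-free ball of radius `2ℓ+1` in `G_A`, then there is a nonzero
`x` with `|supp(x)| ≤ 1 + 2t(t-1)^(ℓ-1)(s-1)^ℓ` and
`‖Ax‖_p^p ≤ t (t-1)^ℓ (s-1)^((1-p)ℓ) ‖x‖_p^p` for every `p ≥ 1`. -/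
theorem tree_vector {m n : ℕ} (s t : ℕ) (hs : 2 ≤ s) (ht : 2 ≤ t) (ℓ : ℕ) (hℓ : 1 ≤ ℓ)
    (A : Matrix (Fin m) (Fin n) ℝ) (hA : Biregular s t A)
    (hball : ∃ v : Fin n, BallAcyclic (bipGraph (matNbrs A)) (Sum.inl v) (2 * ℓ + 1)) :
    ∃ x : Fin n → ℝ, x ≠ 0 ∧
      (Function.support x).ncard ≤ 1 + 2 * t * (t - 1) ^ (ℓ - 1) * (s - 1) ^ ℓ ∧
      ∀ p : ℝ, 1 ≤ p →
        lpNorm p (A.mulVec x) ^ p ≤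
          (t : ℝ) * ((t : ℝ) - 1) ^ ℓ * ((s : ℝ) - 1) ^ ((1 - p) * ℓ) * lpNorm p x ^ p := by
  classical
  obtain ⟨v, hac⟩ := hball
  have ht1 : (1:ℝ) ≤ (t:ℝ) - 1 := by
    have : (2:ℝ) ≤ (t:ℝ) := by exact_mod_cast ht
    linarith
  rcases Nat.lt_or_ge s 3 with hs3 | hs3
  · -- s = 2 : the indicator of v works
    have hs2 : s = 2 := by omega
    refine ⟨fun u => if u = v then 1 else 0, ?_, ?_, ?_⟩
    · intro h
      have := congrFun h v
      simp at this
    · have hsupp : Function.support (fun u => if u = v then (1:ℝ) else 0) = {v} := by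
        ext u
        simp [Function.support]
      rw [hsupp, Set.ncard_singleton]
      exact Nat.le_add_right 1 _
    · intro p hp
      have hp0 : p ≠ 0 := by linarith
      rw [lpNorm_rpow hp0, lpNorm_rpow hp0]
      have hAx : ∀ r, A.mulVec (fun u => if u = v then (1:ℝ) else 0) r = A r v := by
        intro r
        show ∑ u, A r u * (if u = v then (1:ℝ) else 0) = A r v
        rw [Finset.sum_eq_single v]
        · simp
        · intro u _ hu; simp [hu]
        · intro h; exact absurd (Finset.mem_univ v) h
      have hterm : ∀ r, |A r v| ^ p = if A r v ≠ 0 then (1:ℝ) else 0 := by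
        intro r
        rcases hA.1 r v with h | h | h
        · rw [h]; simp [Real.zero_rpow hp0]
        · rw [h]; simp [Real.one_rpow]
        · rw [h]; norm_num [Real.one_rpow]
      have hsum1 : ∑ r, |A.mulVec (fun u => if u = v then (1:ℝ) else 0) r| ^ p = (t:ℝ) := by
        simp_rw [hAx]
        rw [Finset.sum_congr rfl (fun r _ => hterm r), Finset.sum_boole]
        rw [hA.2.2 v]
      have hsum2 : ∑ u, |if u = v then (1:ℝ) else 0| ^ p = 1 := by
        rw [Finset.sum_eq_single v]
        · simp [Real.one_rpow]
        · intro u _ hu; simp [hu, Real.zero_rpow hp0]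
        · intro h; exact absurd (Finset.mem_univ v) h
      rw [hsum1, hsum2, mul_one]
      have hs1 : (s:ℝ) - 1 = 1 := by rw [hs2]; norm_num
      rw [hs1, Real.one_rpow, mul_one]
      have hpow : (1:ℝ) ≤ ((t:ℝ)-1)^ℓ := one_le_pow₀ ht1
      nlinarith [Nat.cast_nonneg (α := ℝ) t]
  · -- s ≥ 3 : the tree vector
    set q : ℕ := (t-1)*(s-1) with hq
    have hq2 : 2 ≤ q := by
      have h1 : 1 ≤ t - 1 := by omega
      have h2 : 2 ≤ s - 1 := by omega
      calc 2 = 1 * 2 := by norm_num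
        _ ≤ (t-1)*(s-1) := Nat.mul_le_mul h1 h2
    set x := treeVec A v ℓ s with hx
    have hxv : x v = 1 := treeVec_root
    have hs1R : (2:ℝ) ≤ (s:ℝ) - 1 := by
      have : (3:ℝ) ≤ (s:ℝ) := by exact_mod_cast hs3
      linarith
    have hcpos : (0:ℝ) < (s:ℝ) - 1 := by linarith
    refine ⟨x, ?_, ?_, ?_⟩
    · intro h
      rw [h] at hxv
      simp at hxv
    · -- support bound
      have hsub : Function.support x = ↑(Finset.univ.filter (fun u => x u ≠ 0)) := by
        ext u; simp
      rw [hsub, Set.ncard_coe_finset]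
      have hsubset : Finset.univ.filter (fun u => x u ≠ 0) ⊆
          (Finset.range (ℓ+1)).biUnion
            (fun j => Finset.univ.filter (fun u => Sum.inl u ∈ layerF A v (2*j))) := by
        intro u hu
        have hxu := (Finset.mem_filter.mp hu).2
        by_cases hc : (bipGraph (matNbrs A)).Reachable (Sum.inl v) (Sum.inl u) ∧
            (bipGraph (matNbrs A)).dist (Sum.inl v) (Sum.inl u) ≤ 2*ℓ
        swap
        · exact absurd (treeVec_neg hc) hxu
        obtain ⟨hre, hd⟩ := hc
        have hpp := bip_dist_parity hre
        simp only [vside, Sum.elim_inl] at hpp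
        refine Finset.mem_biUnion.mpr ⟨(bipGraph (matNbrs A)).dist (Sum.inl v) (Sum.inl u) / 2,
          Finset.mem_range.mpr (by omega), Finset.mem_filter.mpr ⟨Finset.mem_univ _,
          mem_layerF.mpr ⟨hre, by omega⟩⟩⟩
      have hcount : ∀ j, (Finset.univ.filter (fun u => Sum.inl u ∈ layerF A v (2*j))).card ≤
          (layerF A v (2*j)).card := by
        intro j
        rw [← Finset.card_image_of_injective
          (Finset.univ.filter (fun u => Sum.inl u ∈ layerF A v (2*j)))
          (Sum.inl_injective : Function.Injective (Sum.inl : Fin n → Fin n ⊕ Fin m))]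
        apply Finset.card_le_card
        intro w hw
        obtain ⟨u, hu, rfl⟩ := Finset.mem_image.mp hw
        exact (Finset.mem_filter.mp hu).2
      have hlay0 : (layerF A v 0).card ≤ 1 := layerF_zero
      have hlayj : ∀ j, (layerF A v (2*(j+1))).card ≤ (t*(s-1)) * q^j := by
        intro j
        have h := (layerF_bound hA hs ht v j).2
        have he : 2*(j+1) = 2*j+2 := by ring
        rw [he]
        calc (layerF A v (2*j+2)).card ≤ t * ((t-1)*(s-1))^j * (s-1) := h
          _ = (t*(s-1)) * q^j := by rw [hq]; ring
      calc (Finset.univ.filter (fun u => x u ≠ 0)).card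
          ≤ ((Finset.range (ℓ+1)).biUnion _).card := Finset.card_le_card hsubset
        _ ≤ ∑ j ∈ Finset.range (ℓ+1),
              (Finset.univ.filter (fun u => Sum.inl u ∈ layerF A v (2*j))).card :=
            Finset.card_biUnion_le
        _ ≤ ∑ j ∈ Finset.range (ℓ+1), (layerF A v (2*j)).card :=
            Finset.sum_le_sum (fun j _ => hcount j)
        _ = (∑ j ∈ Finset.range ℓ, (layerF A v (2*(j+1))).card) + (layerF A v 0).card := by
            rw [Finset.sum_range_succ']
        _ ≤ (∑ j ∈ Finset.range ℓ, (t*(s-1)) * q^j) + 1 := by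
            refine Nat.add_le_add (Finset.sum_le_sum (fun j _ => hlayj j)) hlay0
        _ ≤ 2 * (t*(s-1)) * q^(ℓ-1) + 1 := by
            exact Nat.add_le_add_right (nat_geom_bound hq2 (t*(s-1)) ℓ hℓ) 1
        _ = 1 + 2 * t * (t-1)^(ℓ-1) * (s-1)^ℓ := by
            have hsp : (s-1)^ℓ = (s-1)^(ℓ-1)*(s-1) := by
              rw [← pow_succ]
              congr 1
              omega
            rw [hq, mul_pow, hsp]
            ring
    · -- the norm bound
      intro p hp
      have hp0 : p ≠ 0 := by linarith
      rw [lpNorm_rpow hp0, lpNorm_rpow hp0]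
      set β : ℝ := ((s:ℝ)-1)⁻¹ with hβ
      have hβpos : 0 < β := by rw [hβ]; positivity
      -- lower bound for ∑ |x u|^p
      have hxlow : (1:ℝ) ≤ ∑ u, |x u| ^ p := by
        have h1 : |x v| ^ p = 1 := by rw [hxv]; simp [Real.one_rpow]
        calc (1:ℝ) = |x v| ^ p := h1.symm
          _ ≤ ∑ u, |x u| ^ p := Finset.single_le_sum
              (f := fun u => |x u|^p) (fun i _ => Real.rpow_nonneg (abs_nonneg _) p)
              (Finset.mem_univ v)
      -- upper bound for ∑ |Ax r|^p
      set Bd : Finset (Fin m) :=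
        Finset.univ.filter (fun r => Sum.inr r ∈ layerF A v (2*ℓ+1)) with hBd
      have hBdcard : (Bd.card : ℝ) ≤ ((t * ((t-1)*(s-1))^ℓ : ℕ) : ℝ) := by
        have h1 : Bd.card ≤ (layerF A v (2*ℓ+1)).card := by
          rw [hBd, ← Finset.card_image_of_injective
            (Finset.univ.filter (fun r => Sum.inr r ∈ layerF A v (2*ℓ+1)))
            (Sum.inr_injective : Function.Injective (Sum.inr : Fin m → Fin n ⊕ Fin m))]
          apply Finset.card_le_card
          intro w hw
          obtain ⟨r, hr, rfl⟩ := Finset.mem_image.mp hw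
          exact (Finset.mem_filter.mp hr).2
        have h2 := (layerF_bound hA hs ht v ℓ).1
        exact_mod_cast le_trans h1 h2
      have hterm : ∀ r : Fin m, |A.mulVec x r| ^ p ≤ (if r ∈ Bd then (β^ℓ)^p else 0) := by
        intro r
        rcases treeVec_mulVec hs hA hac r with h0 | ⟨hre, hd, habs⟩
        · rw [h0, abs_zero, Real.zero_rpow hp0]
          split
          · exact Real.rpow_nonneg (by positivity) p
          · exact le_refl 0
        · have hmem : r ∈ Bd := by
            rw [hBd]
            exact Finset.mem_filter.mpr ⟨Finset.mem_univ _, mem_layerF.mpr ⟨hre, hd⟩⟩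
          rw [if_pos hmem, habs]
      have hup : ∑ r, |A.mulVec x r| ^ p ≤ (Bd.card : ℝ) * (β^ℓ)^p := by
        calc ∑ r, |A.mulVec x r| ^ p ≤ ∑ r, (if r ∈ Bd then (β^ℓ)^p else 0) :=
            Finset.sum_le_sum (fun r _ => hterm r)
          _ = (Bd.card : ℝ) * (β^ℓ)^p := by
            rw [Finset.sum_ite_mem, Finset.univ_inter, Finset.sum_const, nsmul_eq_mul]
      -- putting it together
      have hcast : ((t * ((t-1)*(s-1))^ℓ : ℕ) : ℝ) = (t:ℝ) * (((t:ℝ)-1)*((s:ℝ)-1))^ℓ := by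
        push_cast [Nat.cast_sub (by omega : 1 ≤ t), Nat.cast_sub (by omega : 1 ≤ s)]
        ring
      have hkey : ((s:ℝ)-1)^ℓ * (β^ℓ)^p = ((s:ℝ)-1)^((1-p)*ℓ) := by
        have h1 : β^ℓ = ((s:ℝ)-1)^(-(ℓ:ℝ)) := by
          rw [hβ, inv_pow, ← Real.rpow_natCast ((s:ℝ)-1) ℓ, ← Real.rpow_neg hcpos.le]
        have h2 : (β^ℓ)^p = ((s:ℝ)-1)^(-(ℓ:ℝ)*p) := by
          rw [h1, ← Real.rpow_mul hcpos.le]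
        rw [h2, ← Real.rpow_natCast ((s:ℝ)-1) ℓ, ← Real.rpow_add hcpos]
        congr 1
        ring
      have hpowpos : (0:ℝ) < (t:ℝ) * ((t:ℝ)-1)^ℓ * ((s:ℝ)-1)^((1-p)*ℓ) := by
        have h1 : (0:ℝ) < (t:ℝ) := by
          have : (2:ℝ) ≤ (t:ℝ) := by exact_mod_cast ht
          linarith
        have h2 : (0:ℝ) < ((t:ℝ)-1)^ℓ := pow_pos (by linarith) ℓ
        have h3 : (0:ℝ) < ((s:ℝ)-1)^((1-p)*ℓ) := Real.rpow_pos_of_pos hcpos _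
        exact mul_pos (mul_pos h1 h2) h3
      calc ∑ r, |A.mulVec x r| ^ p ≤ (Bd.card : ℝ) * (β^ℓ)^p := hup
        _ ≤ ((t * ((t-1)*(s-1))^ℓ : ℕ) : ℝ) * (β^ℓ)^p := by
            apply mul_le_mul_of_nonneg_right hBdcard
            exact Real.rpow_nonneg (by positivity) p
        _ = (t:ℝ) * ((t:ℝ)-1)^ℓ * (((s:ℝ)-1)^ℓ * (β^ℓ)^p) := by
            rw [hcast, mul_pow]
            ring
        _ = (t:ℝ) * ((t:ℝ)-1)^ℓ * ((s:ℝ)-1)^((1-p)*ℓ) := by rw [hkey]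
        _ ≤ (t:ℝ) * ((t:ℝ)-1)^ℓ * ((s:ℝ)-1)^((1-p)*ℓ) * ∑ u, |x u| ^ p := by
            exact le_mul_of_one_le_right hpowpos.le hxlow
end

section
/- Let A ∈ ℝ^{m×n}, let σ > 0 satisfy ‖Av‖₂ ≥ σ‖v‖₂ for every v ∈ ℝ^n orthogonal to ker(A), and let x ∈ ℝ^n with ‖x‖₂ = 1. Set ε = ‖Ax‖₂/σ and assume ε < 1. Then ker(A) contains a vector y that is (|supp(x)|, ε/(1−ε))-ℓ₂-compressible; moreover one may take y to be the orthogonal projection of x onto ker(A). -/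
open Finset

lemma lpNorm_two_eq {ι : Type*} [Fintype ι] (v : ι → ℝ) :
    lpNorm 2 v = ‖(WithLp.equiv 2 (ι → ℝ)).symm v‖ := by
  rw [EuclideanSpace.norm_eq, lpNorm, Real.sqrt_eq_rpow]
  congr 1
  · refine Finset.sum_congr rfl fun i _ => ?_
    rw [Real.norm_eq_abs, ← Real.rpow_two]
    rfl


open Matrix in
/-- **Rounding to the kernel.** If `‖Av‖₂ ≥ σ‖v‖₂ for every `v` orthogonal to `ker A`,
`‖x‖₂ = 1` and `ε = ‖Ax‖₂/σ < 1`, then `ker A` contains a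
`(|supp(x)|, ε/(1-ε))`-`ℓ₂`-compressible vector `y`, which may be taken to be the
orthogonal projection of `x` onto `ker A`. -/
theorem rounding_to_kernel {m n : ℕ} (A : Matrix (Fin m) (Fin n) ℝ) (σ : ℝ) (hσ : 0 < σ)
    (hA : ∀ v : Fin n → ℝ, (∀ z : Fin n → ℝ, A.mulVec z = 0 → v ⬝ᵥ z = 0) →
      σ * lpNorm 2 v ≤ lpNorm 2 (A.mulVec v))
    (x : Fin n → ℝ) (hx : lpNorm 2 x = 1)
    (ε : ℝ) (hεdef : ε = lpNorm 2 (A.mulVec x) / σ) (hε1 : ε < 1) :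
    ∃ y : Fin n → ℝ, A.mulVec y = 0 ∧
      (∀ z : Fin n → ℝ, A.mulVec z = 0 → (x - y) ⬝ᵥ z = 0) ∧
      y ≠ 0 ∧
      Compressible 2 ((Function.support x).ncard : ℝ) (ε / (1 - ε)) y := by
  classical
  let L : EuclideanSpace ℝ (Fin n) →ₗ[ℝ] (Fin m → ℝ) :=
    A.mulVecLin ∘ₗ (WithLp.linearEquiv 2 ℝ (Fin n → ℝ)).toLinearMap
  let K : Submodule ℝ (EuclideanSpace ℝ (Fin n)) := LinearMap.ker L
  haveI : CompleteSpace K := FiniteDimensional.complete ℝ K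
  let xE : EuclideanSpace ℝ (Fin n) := (WithLp.equiv 2 (Fin n → ℝ)).symm x
  let y : Fin n → ℝ := WithLp.equiv 2 (Fin n → ℝ) ((K.orthogonalProjectionOnto xE : K) : EuclideanSpace ℝ (Fin n))
  have hyK : A.mulVec y = 0 := (K.orthogonalProjectionOnto xE).2
  have horth : ∀ z : Fin n → ℝ, A.mulVec z = 0 → (x - y) ⬝ᵥ z = 0 := by
    intro z hz
    have hmem : xE - ((K.orthogonalProjectionOnto xE : K) : EuclideanSpace ℝ (Fin n)) ∈ Kᗮ :=
      Submodule.sub_starProjection_mem_orthogonal xE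
    have h2 := hmem ((WithLp.equiv 2 (Fin n → ℝ)).symm z) hz
    rw [real_inner_comm, PiLp.inner_apply] at h2
    simpa [dotProduct, RCLike.inner_apply, xE, y, Matrix.sub_apply, mul_comm] using h2
  have hAxy : A.mulVec (x - y) = A.mulVec x := by
    rw [Matrix.mulVec_sub, hyK, sub_zero]
  have hlpAx : lpNorm 2 (A.mulVec x) = ε * σ := by
    rw [hεdef]; field_simp
  have hε0 : 0 ≤ ε := by
    rw [hεdef]
    apply div_nonneg _ hσ.le
    rw [lpNorm_two_eq]; positivity
  have hxy : lpNorm 2 (x - y) ≤ ε := by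
    have h1 := hA (x - y) horth
    rw [hAxy, hlpAx] at h1
    nlinarith
  have hxyE : lpNorm 2 (x - y) = ‖xE - ((K.orthogonalProjectionOnto xE : K) : EuclideanSpace ℝ (Fin n))‖ := by
    rw [lpNorm_two_eq]; rfl
  have hxE : ‖xE‖ = 1 := by rw [← lpNorm_two_eq]; exact hx
  have hyE : lpNorm 2 y = ‖((K.orthogonalProjectionOnto xE : K) : EuclideanSpace ℝ (Fin n))‖ := by
    rw [lpNorm_two_eq]; rfl
  have hynorm : 1 - ε ≤ lpNorm 2 y := by
    have h3 := norm_sub_norm_le xE ((K.orthogonalProjectionOnto xE : K) : EuclideanSpace ℝ (Fin n))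
    rw [hxE] at h3
    rw [hyE]
    rw [hxyE] at hxy
    linarith
  have hy0 : y ≠ 0 := by
    intro h
    rw [h] at hynorm
    have : lpNorm 2 (0 : Fin n → ℝ) = 0 := by
      rw [lpNorm_two_eq]; simp
    linarith
  refine ⟨y, hyK, horth, hy0, x, le_refl _, ?_⟩
  have h1ε : 0 < 1 - ε := by linarith
  have hyx : lpNorm 2 (y - x) ≤ ε := by
    have hneg : lpNorm 2 (y - x) = lpNorm 2 (x - y) := by
      unfold lpNorm
      congr 1
      refine Finset.sum_congr rfl fun i _ => ?_
      rw [Pi.sub_apply, Pi.sub_apply, abs_sub_comm]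
    rw [hneg]; exact hxy
  calc lpNorm 2 (y - x) ≤ ε := hyx
    _ = (ε / (1 - ε)) * (1 - ε) := by field_simp
    _ ≤ (ε / (1 - ε)) * lpNorm 2 y :=
        mul_le_mul_of_nonneg_left hynorm (div_nonneg hε0 h1ε.le)
end

section
/- Let G = (V_L, V_R, E) be a bipartite t-left-regular (γ,μ)-unique expander with |V_L| = n, and let S ⊆ V_L with |S| ≤ γn. Then there exists a set of edges M ⊆ E(S, N(S)) such that (1) every r ∈ N(S) is incident to exactly one edge of M, and (2) every v ∈ S is incident to at least t(1−μ) edges of M. -/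
open Finset

private theorem hall_cond {n m : ℕ} (t : ℕ) (γ μ : ℝ) (N : Fin n → Finset (Fin m))
    (hexp : UniqueExpander N t γ μ)
    (S : Finset (Fin n)) (hS : (S.card : ℝ) ≤ γ * n) (d : ℕ) (hd : d = ⌈(t : ℝ) * (1 - μ)⌉₊) :
    ∀ T : Finset (Fin n), T ⊆ S → d * T.card ≤ (nbrs N T).card := by
  classical
  intro T
  induction T using Finset.strongInduction with
  | _ T ih =>
    intro hTS
    rcases T.eq_empty_or_nonempty with rfl | hne
    · simp [nbrs]
    -- hypothesis applies to T
    have hTcard : (T.card : ℝ) ≤ γ * n := by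
      have := Finset.card_le_card hTS
      have : (T.card : ℝ) ≤ (S.card : ℝ) := by exact_mod_cast this
      linarith
    have hU : (t : ℝ) * (1 - μ) * T.card ≤ ((uniqueNbrs N T).card : ℝ) := hexp T hTcard
    -- sum identity
    have hsum : ∑ v ∈ T, ((uniqueNbrs N T).filter (fun r => r ∈ N v)).card
        = (uniqueNbrs N T).card := by
      have : ∀ v ∈ T, ((uniqueNbrs N T).filter (fun r => r ∈ N v)).card
          = ∑ r ∈ uniqueNbrs N T, if r ∈ N v then 1 else 0 := by
        intro v _; rw [Finset.card_filter]
      rw [Finset.sum_congr rfl this, Finset.sum_comm]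
      have : ∀ r ∈ uniqueNbrs N T, (∑ v ∈ T, if r ∈ N v then 1 else 0) = 1 := by
        intro r hr
        have := (Finset.mem_filter.mp hr).2
        rw [← Finset.card_filter]
        exact this
      rw [Finset.sum_congr rfl this, Finset.sum_const, smul_eq_mul, mul_one]
    -- exists v with many unique nbrs
    have hex : ∃ v ∈ T, d ≤ ((uniqueNbrs N T).filter (fun r => r ∈ N v)).card := by
      by_contra hcon
      push_neg at hcon
      obtain ⟨v₀, hv₀⟩ := hne
      have hd1 : 1 ≤ d := Nat.one_le_iff_ne_zero.mpr (by
        intro h0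
        exact Nat.not_lt_zero _ (h0 ▸ hcon v₀ hv₀))
      have hle : (uniqueNbrs N T).card ≤ (d - 1) * T.card := by
        rw [← hsum]
        calc ∑ v ∈ T, ((uniqueNbrs N T).filter (fun r => r ∈ N v)).card
            ≤ ∑ _v ∈ T, (d - 1) := Finset.sum_le_sum (fun v hv =>
              Nat.le_sub_one_of_lt (hcon v hv))
          _ = (d - 1) * T.card := by rw [Finset.sum_const, smul_eq_mul, mul_comm]
      have hdx : ((d : ℝ) - 1) < (t : ℝ) * (1 - μ) := by
        have h1 : (d - 1 : ℕ) < ⌈(t : ℝ) * (1 - μ)⌉₊ := hd ▸ Nat.sub_lt hd1 one_pos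
        have h2 : ((d - 1 : ℕ) : ℝ) < (t : ℝ) * (1 - μ) := Nat.lt_ceil.mp h1
        rwa [Nat.cast_sub hd1, Nat.cast_one] at h2
      have hTpos : (0 : ℝ) < T.card := by exact_mod_cast Finset.card_pos.mpr ⟨v₀, hv₀⟩
      have : ((uniqueNbrs N T).card : ℝ) ≤ ((d : ℝ) - 1) * T.card := by
        have := hle
        have : ((uniqueNbrs N T).card : ℝ) ≤ ((d - 1 : ℕ) : ℝ) * T.card := by exact_mod_cast this
        rwa [Nat.cast_sub hd1, Nat.cast_one] at this
      nlinarith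
    obtain ⟨v, hvT, hvd⟩ := hex
    -- disjoint union bound
    set A := nbrs N (T.erase v) with hA
    set B := (uniqueNbrs N T).filter (fun r => r ∈ N v) with hB
    have hAsub : A ⊆ nbrs N T := Finset.biUnion_subset_biUnion_of_subset_left _ (Finset.erase_subset _ _)
    have hBsub : B ⊆ nbrs N T := by
      intro r hr
      exact Finset.filter_subset _ _ ((Finset.mem_filter.mp hr).1)
    have hdisj : Disjoint A B := by
      rw [Finset.disjoint_left]
      intro r hrA hrB
      obtain ⟨u, huT, hru⟩ := Finset.mem_biUnion.mp hrA
      have h1 : (T.filter (fun w => r ∈ N w)).card = 1 :=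
        (Finset.mem_filter.mp ((Finset.mem_filter.mp hrB).1)).2
      have hrv : r ∈ N v := (Finset.mem_filter.mp hrB).2
      have huv : u ≠ v := (Finset.mem_erase.mp huT).1
      have h2 : ({u, v} : Finset (Fin n)) ⊆ T.filter (fun w => r ∈ N w) := by
        intro w hw
        rcases Finset.mem_insert.mp hw with rfl | hw
        · exact Finset.mem_filter.mpr ⟨(Finset.mem_erase.mp huT).2, hru⟩
        · rw [Finset.mem_singleton.mp hw]
          exact Finset.mem_filter.mpr ⟨hvT, hrv⟩
      have := Finset.card_le_card h2
      rw [Finset.card_insert_of_notMem (by simpa using huv), Finset.card_singleton, h1] at this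
      omega
    have hih : d * (T.erase v).card ≤ A.card :=
      ih (T.erase v) (Finset.erase_ssubset hvT) ((Finset.erase_subset _ _).trans hTS)
    have hcard : A.card + B.card ≤ (nbrs N T).card := by
      rw [← Finset.card_union_of_disjoint hdisj]
      exact Finset.card_le_card (Finset.union_subset hAsub hBsub)
    have hTc : T.card = (T.erase v).card + 1 := by
      rw [Finset.card_erase_of_mem hvT]
      have := Finset.card_pos.mpr hne
      omega
    calc d * T.card = d * (T.erase v).card + d := by rw [hTc]; ring
      _ ≤ A.card + B.card := Nat.add_le_add hih hvd
      _ ≤ _ := hcard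


/-- **Existence of a many-to-one matching.** If `G` is a `t`-left-regular `(γ, μ)`-unique
expander and `|S| ≤ γn`, then there is a set of edges `M ⊆ E(S, N(S))` such that every
`r ∈ N(S)` touches exactly one edge of `M` and every `v ∈ S` touches at least `t(1-μ)`
edges of `M`. -/
theorem matching_exists {n m : ℕ} (t : ℕ) (γ μ : ℝ) (N : Fin n → Finset (Fin m))
    (hreg : LeftRegular N t) (hexp : UniqueExpander N t γ μ)
    (S : Finset (Fin n)) (hS : (S.card : ℝ) ≤ γ * n) :
    ∃ M : Finset (Fin n × Fin m),
      (∀ e ∈ M, e.1 ∈ S ∧ e.2 ∈ N e.1) ∧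
      (∀ r ∈ nbrs N S, (M.filter (fun e => e.2 = r)).card = 1) ∧
      (∀ v ∈ S, (t : ℝ) * (1 - μ) ≤ ((M.filter (fun e => e.1 = v)).card : ℝ)) := by
  classical
  set d : ℕ := ⌈(t : ℝ) * (1 - μ)⌉₊ with hd
  have hall := hall_cond t γ μ N hexp S hS d hd
  -- Hall's theorem for the d-fold matching
  have hallA : ∀ A : Finset (↥S × Fin d), A.card ≤ (A.biUnion fun p => N p.1.1).card := by
    intro A
    set T := A.image (fun p => (p.1.1 : Fin n)) with hT
    have hTS : T ⊆ S := by
      intro v hv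
      obtain ⟨p, _, rfl⟩ := Finset.mem_image.mp hv
      exact p.1.2
    have h1 : A.card ≤ d * T.card := by
      refine Finset.card_le_mul_card_image _ d (fun v _ => ?_)
      calc (A.filter fun p => (p.1 : Fin n) = v).card
          ≤ (Finset.univ : Finset (Fin d)).card := by
            refine Finset.card_le_card_of_injOn (fun p => p.2)
              (fun p _ => Finset.mem_univ _) ?_
            intro p hp q hq hpq
            simp only [Finset.mem_coe, Finset.mem_filter] at hp hq
            exact Prod.ext (Subtype.ext (hp.2.trans hq.2.symm)) hpq
        _ = d := by simp
    have h2 : A.biUnion (fun p => N p.1.1) = nbrs N T := by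
      ext r
      simp only [Finset.mem_biUnion, nbrs, hT, Finset.mem_image]
      constructor
      · rintro ⟨p, hp, hr⟩
        exact ⟨p.1.1, ⟨p, hp, rfl⟩, hr⟩
      · rintro ⟨v, ⟨p, hp, rfl⟩, hr⟩
        exact ⟨p, hp, hr⟩
    calc A.card ≤ d * T.card := h1
      _ ≤ (nbrs N T).card := hall T hTS
      _ = (A.biUnion fun p => N p.1.1).card := by rw [h2]
  obtain ⟨f, hfinj, hf⟩ :=
    (Finset.all_card_le_biUnion_card_iff_exists_injective (fun p : ↥S × Fin d => N p.1.1)).mp hallA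
  have hrmem : ∀ p : ↥S × Fin d, f p ∈ nbrs N S :=
    fun p => Finset.mem_biUnion.mpr ⟨p.1.1, p.1.2, hf p⟩
  -- choose, for each r ∈ N(S), a left endpoint
  have hchoice : ∀ r ∈ nbrs N S, ∃ v, v ∈ S ∧ r ∈ N v ∧
      ∀ p : ↥S × Fin d, f p = r → (p.1 : Fin n) = v := by
    intro r hr
    by_cases hex : ∃ p : ↥S × Fin d, f p = r
    · obtain ⟨p₀, hp₀⟩ := hex
      refine ⟨p₀.1.1, p₀.1.2, hp₀ ▸ hf p₀, fun p hp => ?_⟩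
      have : p = p₀ := hfinj (hp.trans hp₀.symm)
      rw [this]
    · obtain ⟨v, hvS, hrv⟩ := Finset.mem_biUnion.mp hr
      exact ⟨v, hvS, hrv, fun p hp => absurd ⟨p, hp⟩ hex⟩
  choose g hg1 hg2 hg3 using hchoice
  refine ⟨(nbrs N S).attach.image (fun r => (g r.1 r.2, (r.1 : Fin m))), ?_, ?_, ?_⟩
  · rintro e he
    obtain ⟨r, _, rfl⟩ := Finset.mem_image.mp he
    exact ⟨hg1 r.1 r.2, hg2 r.1 r.2⟩
  · intro r hr
    rw [Finset.card_eq_one]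
    refine ⟨(g r hr, r), ?_⟩
    ext e
    simp only [Finset.mem_filter, Finset.mem_image, Finset.mem_attach, true_and,
      Finset.mem_singleton]
    constructor
    · rintro ⟨⟨r', rfl⟩, h2⟩
      simp only at h2
      cases r' with
      | mk r' hr' =>
        simp only at h2
        subst h2
        rfl
    · rintro rfl
      exact ⟨⟨⟨r, hr⟩, rfl⟩, rfl⟩
  · intro v hv
    have hdle : d ≤ (Finset.filter (fun e => e.1 = v)
        ((nbrs N S).attach.image (fun r => (g r.1 r.2, (r.1 : Fin m))))).card := by
      have hmem : ∀ i : Fin d, ((v : Fin n), f (⟨v, hv⟩, i)) ∈ Finset.filter (fun e => e.1 = v)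
          ((nbrs N S).attach.image (fun r => (g r.1 r.2, (r.1 : Fin m)))) := by
        intro i
        have hr : f (⟨v, hv⟩, i) ∈ nbrs N S := hrmem _
        have hgv : g (f (⟨v, hv⟩, i)) hr = v := (hg3 _ hr (⟨v, hv⟩, i) rfl).symm ▸ rfl
        refine Finset.mem_filter.mpr ⟨Finset.mem_image.mpr
          ⟨⟨f (⟨v, hv⟩, i), hr⟩, Finset.mem_attach _ _, ?_⟩, rfl⟩
        simp [hgv]
      have hinj : ∀ i ∈ (Finset.univ : Finset (Fin d)), ∀ j ∈ (Finset.univ : Finset (Fin d)),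
          ((v : Fin n), f (⟨v, hv⟩, i)) = ((v : Fin n), f (⟨v, hv⟩, j)) → i = j := by
        intro i _ j _ hij
        have h1 : f (⟨v, hv⟩, i) = f (⟨v, hv⟩, j) := congrArg Prod.snd hij
        exact (Prod.ext_iff.mp (hfinj h1)).2
      calc d = (Finset.univ : Finset (Fin d)).card := by simp
        _ ≤ _ := Finset.card_le_card_of_injOn _ (fun i _ => hmem i) hinj
    have : ((t : ℝ) * (1 - μ)) ≤ (d : ℝ) := hd ▸ Nat.le_ceil _
    have hc : (d : ℝ) ≤ _ := Nat.cast_le.mpr hdle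
    linarith
end
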